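/- arXiv:1305.1172 — 5 statements merged into one kernel-verified Lean document; each statement's English description precedes it below -/
import Mathlib

section
/- Let (X,d_X) be a compact metric space. Then (X,d_X) is a path metric space (the distance between any two points equals the infimum of lengths of continuous curves joining them) if and only if for every x, y ∈ X and every ε > 0 there exists z ∈ X such that max(d_X(x,z), d_X(y,z)) ≤ (1/2) d_X(x,y) + ε. -/
open Set Metric

/-- A metric space is a path metric space (length space) if the distance between any two
points is the infimum of the lengths of continuous curves joining them, the length of a
curve being its total variation. -/
def IsPathMetricSpace (X : Type*) [MetricSpace X] : Prop :=
  ∀ x y : X, edist x y = ⨅ γ : Path x y, eVariationOn γ Set.univ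

namespace PathMetricAux

variable {X : Type*} [MetricSpace X]

/-- The dyadic midpoint scheme: `F m x y n k` is the value the curve should take at the
dyadic time `k / 2 ^ n`, built by iterated insertion of midpoints (via the midpoint
selector `m`). -/
noncomputable def F (m : X → X → X) (x y : X) : ℕ → ℕ → X
  | 0, k => if k = 0 then x else y
  | n + 1, k =>
      if k % 2 = 0 then F m x y n (k / 2)
      else m (F m x y n (k / 2)) (F m x y n (k / 2 + 1))

lemma F_zero (m : X → X → X) (x y : X) (n : ℕ) : F m x y n 0 = x := by
  induction n with
  | zero => simp [F]
  | succ n ih => simp [F, ih]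

lemma F_pow (m : X → X → X) (x y : X) (n : ℕ) : F m x y n (2 ^ n) = y := by
  induction n with
  | zero => simp [F]
  | succ n ih =>
      have h1 : 2 ^ (n + 1) % 2 = 0 := by
        have : 2 ^ (n + 1) = 2 ^ n * 2 := by ring
        omega
      have h2 : 2 ^ (n + 1) / 2 = 2 ^ n := by
        have : 2 ^ (n + 1) = 2 ^ n * 2 := by ring
        omega
      simp [F, h1, h2, ih]

lemma F_even (m : X → X → X) (x y : X) (n k : ℕ) : F m x y (n + 1) (2 * k) = F m x y n k := by
  have h1 : 2 * k % 2 = 0 := by omega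
  have h2 : 2 * k / 2 = k := by omega
  simp [F, h1, h2]

lemma F_odd (m : X → X → X) (x y : X) (n k : ℕ) :
    F m x y (n + 1) (2 * k + 1) = m (F m x y n k) (F m x y n (k + 1)) := by
  have h1 : (2 * k + 1) % 2 = 1 := by omega
  have h2 : (2 * k + 1) / 2 = k := by omega
  simp [F, h1, h2]

lemma F_step (m : X → X → X) (x y : X)
    (hm1 : ∀ a b : X, dist a (m a b) ≤ dist a b / 2)
    (hm2 : ∀ a b : X, dist b (m a b) ≤ dist a b / 2) (n k : ℕ) :
    dist (F m x y n k) (F m x y n (k + 1)) ≤ dist x y / 2 ^ n := by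
  induction n generalizing k with
  | zero =>
      rcases Nat.eq_zero_or_pos k with rfl | hk
      · simp [F]
      · have h1 : k ≠ 0 := hk.ne'
        have h2 : k + 1 ≠ 0 := by omega
        simp [F, h1, h2, dist_nonneg]
  | succ n ih =>
      have hsplit : dist x y / 2 ^ (n + 1) = dist x y / 2 ^ n / 2 := by
        rw [pow_succ, ← div_div]
      rcases Nat.even_or_odd k with ⟨j, hj⟩ | ⟨j, hj⟩
      · have hk : k = 2 * j := by omega
        subst hk
        rw [show 2 * j + 1 = 2 * j + 1 from rfl, F_even, F_odd]
        have := (hm1 (F m x y n j) (F m x y n (j + 1))).trans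
          (by linarith [ih j] : dist (F m x y n j) (F m x y n (j + 1)) / 2 ≤ dist x y / 2 ^ n / 2)
        linarith [hsplit ▸ this, hsplit]
      · have hk : k = 2 * j + 1 := by omega
        subst hk
        rw [show 2 * j + 1 + 1 = 2 * (j + 1) from by ring, F_odd, F_even]
        rw [dist_comm]
        have := (hm2 (F m x y n j) (F m x y n (j + 1))).trans
          (by linarith [ih j] : dist (F m x y n j) (F m x y n (j + 1)) / 2 ≤ dist x y / 2 ^ n / 2)
        linarith [hsplit]

lemma F_chain (m : X → X → X) (x y : X)
    (hm1 : ∀ a b : X, dist a (m a b) ≤ dist a b / 2)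
    (hm2 : ∀ a b : X, dist b (m a b) ≤ dist a b / 2) (n j l : ℕ) :
    dist (F m x y n j) (F m x y n (j + l)) ≤ l * (dist x y / 2 ^ n) := by
  induction l with
  | zero => simp
  | succ l ih =>
      have h1 := dist_triangle (F m x y n j) (F m x y n (j + l)) (F m x y n (j + l + 1))
      have h2 := F_step m x y hm1 hm2 n (j + l)
      have : dist (F m x y n j) (F m x y n (j + (l + 1))) ≤
          l * (dist x y / 2 ^ n) + dist x y / 2 ^ n := by
        rw [show j + (l + 1) = j + l + 1 from by ring]
        linarith
      push_cast
      linarith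

/-- Exact midpoints exist in a compact space with approximate midpoints. -/
lemma exists_midpoint [CompactSpace X]
    (H : ∀ x y : X, ∀ ε > (0 : ℝ), ∃ z : X,
      max (dist x z) (dist y z) ≤ dist x y / 2 + ε) (a b : X) :
    ∃ z : X, dist a z ≤ dist a b / 2 ∧ dist b z ≤ dist a b / 2 := by
  haveI : Nonempty X := ⟨a⟩
  have hg : Continuous fun z : X => max (dist a z) (dist b z) :=
    (continuous_const.dist continuous_id).max (continuous_const.dist continuous_id)
  obtain ⟨z₀, -, hz₀⟩ := isCompact_univ.exists_isMinOn ⟨a, mem_univ a⟩ hg.continuousOn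
  have hle : max (dist a z₀) (dist b z₀) ≤ dist a b / 2 := by
    refine le_of_forall_pos_le_add fun ε hε => ?_
    obtain ⟨z, hz⟩ := H a b ε hε
    exact (hz₀ (mem_univ z)).trans hz
  exact ⟨z₀, (le_max_left _ _).trans hle, (le_max_right _ _).trans hle⟩

end PathMetricAux

open PathMetricAux Filter Topology in
/-- A compact metric space is a path metric space if and only if it admits approximate
midpoints: for all `x, y` and `ε > 0` there is `z` with
`max (d(x,z)) (d(y,z)) ≤ d(x,y)/2 + ε`. -/
theorem isPathMetricSpace_iff_approx_midpoints (X : Type*) [MetricSpace X] [CompactSpace X] :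
    IsPathMetricSpace X ↔
      ∀ x y : X, ∀ ε > (0 : ℝ), ∃ z : X,
        max (dist x z) (dist y z) ≤ dist x y / 2 + ε := by
  constructor
  · intro hP x y ε hε
    have hne : edist x y ≠ ⊤ := edist_ne_top x y
    have hlt : ⨅ γ : Path x y, eVariationOn γ Set.univ
        < edist x y + ENNReal.ofReal ε := by
      rw [← hP x y]
      exact ENNReal.lt_add_right hne (ENNReal.ofReal_pos.2 hε).ne'
    obtain ⟨γ, hγ⟩ := iInf_lt_iff.1 hlt
    -- find a point on the curve equidistant from the endpoints, by the IVT
    set φ : ℝ → X := fun r => γ (projIcc 0 1 zero_le_one r) with hφdef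
    have hφ : Continuous φ := γ.continuous.comp continuous_projIcc
    set g : ℝ → ℝ := fun r => dist x (φ r) - dist y (φ r) with hgdef
    have hg : Continuous g := (continuous_const.dist hφ).sub (continuous_const.dist hφ)
    have hg0 : g 0 = -dist x y := by
      simp [hgdef, hφdef, projIcc_left, dist_comm]
    have hg1 : g 1 = dist x y := by
      simp [hgdef, hφdef, projIcc_right]
    have h0mem : (0 : ℝ) ∈ Icc (g 0) (g 1) := by
      rw [hg0, hg1]
      constructor <;> [linarith [dist_nonneg (x := x) (y := y)];
        exact dist_nonneg]
    obtain ⟨r, hr, hgr⟩ := intermediate_value_Icc zero_le_one hg.continuousOn h0mem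
    set t : unitInterval := projIcc 0 1 zero_le_one r with htdef
    set z : X := γ t with hzdef
    have hz : dist x z = dist y z := by
      have : dist x (φ r) - dist y (φ r) = 0 := hgr
      simp only [hφdef] at this
      rw [hzdef, htdef]
      linarith
    -- bound `d(x,z) + d(z,y)` by the variation of the curve
    have ht0 : (0 : unitInterval) ≤ t := t.2.1
    have ht1 : t ≤ 1 := t.2.2
    have e1 : edist (γ 0) (γ t) ≤ eVariationOn γ ((univ : Set unitInterval) ∩ Icc 0 t) :=
      eVariationOn.edist_le γ ⟨mem_univ _, left_mem_Icc.2 ht0⟩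
        ⟨mem_univ _, right_mem_Icc.2 ht0⟩
    have e2 : edist (γ t) (γ 1) ≤ eVariationOn γ ((univ : Set unitInterval) ∩ Icc t 1) :=
      eVariationOn.edist_le γ ⟨mem_univ _, left_mem_Icc.2 ht1⟩
        ⟨mem_univ _, right_mem_Icc.2 ht1⟩
    have e3 := eVariationOn.Icc_add_Icc γ ht0 ht1 (mem_univ t)
    have hle : edist x z + edist z y ≤ eVariationOn γ Set.univ := by
      have h4 : edist (γ 0) (γ t) + edist (γ t) (γ 1)
          ≤ eVariationOn γ ((univ : Set unitInterval) ∩ Icc 0 1) := by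
        rw [← e3]; exact add_le_add e1 e2
      have h5 : eVariationOn γ ((univ : Set unitInterval) ∩ Icc 0 1)
          ≤ eVariationOn γ Set.univ := eVariationOn.mono γ inter_subset_left
      calc edist x z + edist z y = edist (γ 0) (γ t) + edist (γ t) (γ 1) := by
            rw [γ.source, γ.target, hzdef]
        _ ≤ _ := h4.trans h5
    have hlt2 : edist x z + edist z y < edist x y + ENNReal.ofReal ε := hle.trans_lt hγ
    rw [edist_dist, edist_dist, edist_dist, ← ENNReal.ofReal_add dist_nonneg dist_nonneg,
      ← ENNReal.ofReal_add dist_nonneg hε.le] at hlt2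
    have hsum : dist x z + dist z y < dist x y + ε := by
      have h6 : (0 : ℝ) < dist x y + ε := by linarith [dist_nonneg (x := x) (y := y)]
      exact (ENNReal.ofReal_lt_ofReal_iff h6).1 hlt2
    refine ⟨z, ?_⟩
    have hmax : max (dist x z) (dist y z) = dist x z := max_eq_left hz.ge
    have hcz : dist z y = dist y z := dist_comm z y
    rw [hmax]
    linarith
  · intro H x y
    haveI : Nonempty X := ⟨x⟩
    choose m hm1 hm2 using fun a b : X => exists_midpoint H a b
    set D : ℝ := dist x y with hDdef
    have hD0 : 0 ≤ D := dist_nonneg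
    set u : ℕ → ℝ → X := fun n t => F m x y n ⌊t * 2 ^ n⌋₊ with hudef
    -- doubling of natural floors
    have hfl : ∀ r : ℝ, ⌊2 * r⌋₊ = 2 * ⌊r⌋₊ ∨ ⌊2 * r⌋₊ = 2 * ⌊r⌋₊ + 1 := by
      intro r
      rcases lt_or_ge r 0 with hr | hr
      · left
        rw [Nat.floor_of_nonpos hr.le, Nat.floor_of_nonpos (by linarith)]
      · have h1 : 2 * ⌊r⌋₊ ≤ ⌊2 * r⌋₊ := by
          apply Nat.le_floor
          push_cast
          nlinarith [Nat.floor_le hr]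
        have h2 : ⌊2 * r⌋₊ < 2 * ⌊r⌋₊ + 2 := by
          rw [Nat.floor_lt (by linarith)]
          push_cast
          nlinarith [Nat.lt_floor_add_one r]
        omega
    -- consecutive levels are geometrically close
    have hstep : ∀ t : ℝ, ∀ n : ℕ, dist (u n t) (u (n + 1) t) ≤ D / 2 / 2 ^ n := by
      intro t n
      have hmul : t * 2 ^ (n + 1) = 2 * (t * 2 ^ n) := by ring
      have hsplit : D / 2 / 2 ^ n = D / 2 ^ n / 2 := by ring
      rcases hfl (t * 2 ^ n) with h | h
      · have : u (n + 1) t = u n t := by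
          simp only [hudef, hmul, h, F_even]
        rw [this, dist_self]
        positivity
      · have h2 : u (n + 1) t = m (F m x y n ⌊t * 2 ^ n⌋₊) (F m x y n (⌊t * 2 ^ n⌋₊ + 1)) := by
          simp only [hudef, hmul, h, F_odd]
        rw [h2]
        have h3 := hm1 (F m x y n ⌊t * 2 ^ n⌋₊) (F m x y n (⌊t * 2 ^ n⌋₊ + 1))
        have h4 := F_step m x y hm1 hm2 n ⌊t * 2 ^ n⌋₊
        simp only [hudef]
        rw [hsplit]
        rw [← hDdef] at h4
        linarith
    have hcauchy : ∀ t : ℝ, CauchySeq fun n => u n t :=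
      fun t => cauchySeq_of_le_geometric_two (hstep t)
    set c : ℝ → X := fun t => limUnder Filter.atTop fun n => u n t with hcdef
    have htends : ∀ t : ℝ, Filter.Tendsto (fun n => u n t) Filter.atTop (nhds (c t)) :=
      fun t => (hcauchy t).tendsto_limUnder
    have htail : ∀ t : ℝ, ∀ n : ℕ, dist (u n t) (c t) ≤ D / 2 ^ n :=
      fun t n => dist_le_of_le_geometric_two_of_tendsto (hstep t) (htends t) n
    -- distance bound at a fixed level
    have hdistu : ∀ n : ℕ, ∀ s t : ℝ, 0 ≤ s → s ≤ t → t ≤ 1 →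
        dist (u n s) (u n t) ≤ D * (t - s) + D / 2 ^ n := by
      intro n s t hs hst ht
      set j := ⌊s * 2 ^ n⌋₊ with hjdef
      set k := ⌊t * 2 ^ n⌋₊ with hkdef
      have hjk : j ≤ k :=
        Nat.floor_mono (mul_le_mul_of_nonneg_right hst (by positivity))
      have h1 := F_chain m x y hm1 hm2 n j (k - j)
      rw [Nat.add_sub_cancel' hjk, ← hDdef] at h1
      have h2 : ((k - j : ℕ) : ℝ) ≤ (t - s) * 2 ^ n + 1 := by
        have hk : (k : ℝ) ≤ t * 2 ^ n := Nat.floor_le (mul_nonneg (hs.trans hst) (by positivity))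
        have hj : s * 2 ^ n < (j : ℝ) + 1 := Nat.lt_floor_add_one _
        rw [Nat.cast_sub hjk]
        linarith
      have h3 : dist (u n s) (u n t) ≤ ((k - j : ℕ) : ℝ) * (D / 2 ^ n) := h1
      have h4 : ((k - j : ℕ) : ℝ) * (D / 2 ^ n) ≤ ((t - s) * 2 ^ n + 1) * (D / 2 ^ n) :=
        mul_le_mul_of_nonneg_right h2 (by positivity)
      have h5 : ((t - s) * 2 ^ n + 1) * (D / 2 ^ n) = D * (t - s) + D / 2 ^ n := by
        field_simp
      linarith
    -- the limit curve is Lipschitz on [0,1]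
    have hlipbound : ∀ s t : ℝ, s ∈ Icc (0 : ℝ) 1 → t ∈ Icc (0 : ℝ) 1 → s ≤ t →
        dist (c s) (c t) ≤ D * (t - s) := by
      intro s t hsmem htmem hst
      have key : ∀ n : ℕ, dist (c s) (c t) ≤ D * (t - s) + 3 * D * (1 / 2) ^ n := by
        intro n
        have h1 := dist_triangle4 (c s) (u n s) (u n t) (c t)
        have h2 : dist (c s) (u n s) ≤ D / 2 ^ n := by
          rw [dist_comm]; exact htail s n
        have h3 := hdistu n s t hsmem.1 hst htmem.2
        have h4 := htail t n
        have h5 : (1 / 2 : ℝ) ^ n = 1 / 2 ^ n := by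
          rw [div_pow, one_pow]
        have h6 : 3 * D * (1 / 2) ^ n = 3 * (D / 2 ^ n) := by
          rw [h5]; ring
        linarith
      have h7 : Filter.Tendsto (fun n : ℕ => D * (t - s) + 3 * D * (1 / 2) ^ n)
          Filter.atTop (nhds (D * (t - s) + 3 * D * 0)) :=
        Filter.Tendsto.add tendsto_const_nhds
          ((tendsto_pow_atTop_nhds_zero_of_lt_one (by norm_num) (by norm_num)).const_mul _)
      exact ge_of_tendsto' (by simpa using h7) key
    have hlip : LipschitzOnWith (Real.toNNReal D) c (Icc (0 : ℝ) 1) := by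
      apply LipschitzOnWith.of_dist_le'
      intro p hp q hq
      rcases le_total p q with h | h
      · have := hlipbound p q hp hq h
        have habs : dist p q = q - p := by
          rw [Real.dist_eq, abs_of_nonpos (by linarith)]
          ring
        rw [habs]
        linarith
      · have := hlipbound q p hq hp h
        have habs : dist p q = p - q := by
          rw [Real.dist_eq, abs_of_nonneg (by linarith)]
        rw [dist_comm (c p) (c q)] at *
        rw [habs]
        linarith
    -- endpoints
    have hc0 : c 0 = x := by
      have heq : (fun n => u n 0) = fun _ => x := by
        funext n
        simp [hudef, F_zero]
      have := htends 0
      rw [heq] at this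
      exact tendsto_nhds_unique this tendsto_const_nhds
    have hc1 : c 1 = y := by
      have heq : (fun n => u n 1) = fun _ => y := by
        funext n
        have hcast : (1 : ℝ) * 2 ^ n = ((2 ^ n : ℕ) : ℝ) := by push_cast; ring
        simp only [hudef, hcast, Nat.floor_natCast, F_pow]
      have := htends 1
      rw [heq] at this
      exact tendsto_nhds_unique this tendsto_const_nhds
    -- build the path
    have hcont : Continuous fun t : unitInterval => c ↑t :=
      hlip.continuousOn.comp_continuous continuous_subtype_val fun t => t.2
    set γ : Path x y :=
      { toFun := fun t : unitInterval => c ↑t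
        continuous_toFun := hcont
        source' := hc0
        target' := hc1 } with hγdef
    -- its variation is at most `dist x y`
    have hIccuniv : (univ : Set unitInterval) ∩ Icc 0 1 = univ := by
      rw [univ_inter]
      exact eq_univ_of_forall fun t => ⟨t.2.1, t.2.2⟩
    have hvalvar : eVariationOn (Subtype.val : unitInterval → ℝ) univ ≤ 1 := by
      have hmono : MonotoneOn (Subtype.val : unitInterval → ℝ) univ := fun a _ b _ h => h
      have h3 := hmono.eVariationOn_le (mem_univ 0) (mem_univ 1)
      rw [hIccuniv] at h3
      simpa using h3
    have hvar : eVariationOn (⇑γ) Set.univ ≤ edist x y := by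
      have h1 := hlip.comp_eVariationOn_le
        (g := (Subtype.val : unitInterval → ℝ)) (s := univ) (fun t _ => t.2)
      have h2 : eVariationOn (c ∘ (Subtype.val : unitInterval → ℝ)) univ
          ≤ (Real.toNNReal D : ENNReal) * 1 :=
        h1.trans (mul_le_mul_right hvalvar _)
      rw [mul_one] at h2
      have h3 : (Real.toNNReal D : ENNReal) = edist x y := by
        rw [edist_dist, ← hDdef, ENNReal.ofReal]
      rw [← h3]
      exact h2
    refine le_antisymm (le_iInf fun γ' => ?_) ((iInf_le _ γ).trans hvar)
    have h1 := eVariationOn.edist_le (⇑γ') (mem_univ (0 : unitInterval)) (mem_univ 1)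
    rw [γ'.source, γ'.target] at h1
    exact h1
end

section
/- Let (G,d_G) be a connected finite metric graph, r ∈ G, and for α > 0 let N_E(α) denote the number of edges of G of length at most α. For any d > 0, every connected component B of the set B_{d,α} = {x ∈ G : d − α ≤ d_G(r,x) ≤ d + α} satisfies diam(B) ≤ 4·(2 + N_E(4α))·α. -/
open Set Metric

noncomputable section

/-- A finite metric graph structure on a metric space `G`: a finite set of edges, each
isometrically parametrized by arc length on `[0, len e]`, covering `G`, with pairwise
disjoint open edges, and such that the metric of `G` is the associated shortest-path
metric (i.e. the largest pseudometric making all edge parametrizations 1-Lipschitz). -/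
structure MetricGraphStruct (G : Type*) [MetricSpace G] where
  /-- the (finite) index type of edges -/
  E : Type
  fintypeE : Fintype E
  /-- length of each edge -/
  len : E → ℝ
  len_pos : ∀ e, 0 < len e
  /-- arc-length parametrization of each edge on `[0, len e]` -/
  param : E → ℝ → G
  param_lipschitz : ∀ e, LipschitzOnWith 1 (param e) (Set.Icc 0 (len e))
  /-- the edges cover `G` -/
  cover : ∀ x : G, ∃ e, ∃ t ∈ Set.Icc 0 (len e), param e t = x
  /-- each open edge is simple -/
  injOn : ∀ e, Set.InjOn (param e) (Set.Ioo 0 (len e))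
  /-- open edges are pairwise disjoint -/
  disjoint_interiors : ∀ e₁ e₂, e₁ ≠ e₂ → ∀ s ∈ Set.Ioo 0 (len e₁), ∀ t ∈ Set.Ioo 0 (len e₂),
    param e₁ s ≠ param e₂ t
  /-- endpoints of edges do not lie in open edges -/
  endpoint_not_interior : ∀ e e', ∀ t ∈ Set.Ioo 0 (len e'),
    param e 0 ≠ param e' t ∧ param e (len e) ≠ param e' t
  /-- the metric of `G` is the shortest-path metric: it is maximal among pseudometrics
  making every edge parametrization 1-Lipschitz -/
  dist_maximal : ∀ δ : G → G → ℝ, (∀ p, δ p p = 0) → (∀ p q, δ p q = δ q p) →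
    (∀ p q s, δ p s ≤ δ p q + δ q s) →
    (∀ e, ∀ s ∈ Set.Icc 0 (len e), ∀ t ∈ Set.Icc 0 (len e),
      δ (param e s) (param e t) ≤ |s - t|) →
    ∀ p q, δ p q ≤ dist p q

namespace MetricGraphStruct

variable {G : Type*} [MetricSpace G] (M : MetricGraphStruct G)

/-- first endpoint of an edge -/
def src (e : M.E) : G := M.param e 0

/-- second endpoint of an edge -/
def tgt (e : M.E) : G := M.param e (M.len e)

/-- the set of vertices (endpoints of edges) -/
def vertexSet : Set G := {v | ∃ e, v = M.src e ∨ v = M.tgt e}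

/-- `N_E(α)`: the number of edges of length at most `α` -/
def NE (α : ℝ) : ℕ := Nat.card {e : M.E // M.len e ≤ α}

/-- the first Betti number of a connected finite graph: `#E - #V + 1` -/
def betti1 : ℕ := Nat.card M.E + 1 - Nat.card M.vertexSet

end MetricGraphStruct

end

section AuxLemmas

theorem segment_pieces (A B p q d α : ℝ) (h : ℝ → ℝ)
    (hform : ∀ t ∈ Icc p q, h t = min (A + (t - p)) (B + (q - t))) :
    ∃ J₁ J₂ : Set ℝ, (∃ u v, J₁ = Icc u v) ∧ (∃ u v, J₂ = Icc u v) ∧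
      (∀ t ∈ J₁, t ∈ Icc p q ∧ d - α ≤ h t ∧ h t ≤ d + α) ∧
      (∀ t ∈ J₂, t ∈ Icc p q ∧ d - α ≤ h t ∧ h t ≤ d + α) ∧
      (∀ t ∈ Icc p q, d - α ≤ h t → h t ≤ d + α → t ∈ J₁ ∨ t ∈ J₂) ∧
      (∀ s ∈ J₁, ∀ t ∈ J₁, |s - t| ≤ 4 * α) ∧
      (∀ s ∈ J₂, ∀ t ∈ J₂, |s - t| ≤ 4 * α) ∧
      (J₁ ∩ J₂ = ∅) := by
  set u₀ := p + (d - α - A) with hu₀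
  set v₀ := q - (d - α - B) with hv₀
  set c₁ := p + (d + α - A) with hc₁
  set c₂ := q - (d + α - B) with hc₂
  set u := max p u₀ with hu
  set v := min q v₀ with hv
  have key : ∀ t ∈ Icc p q, (d - α ≤ h t ↔ u₀ ≤ t ∧ t ≤ v₀) ∧
      (h t ≤ d + α ↔ t ≤ c₁ ∨ c₂ ≤ t) := by
    intro t ht
    rw [hform t ht]
    constructor
    · rw [le_min_iff]
      constructor
      · rintro ⟨h1, h2⟩; constructor <;> [skip; skip] <;> simp only [hu₀, hv₀] <;> linarith
      · rintro ⟨h1, h2⟩; constructor <;> simp only [hu₀, hv₀] at h1 h2 <;> linarith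
    · rw [min_le_iff]
      constructor
      · rintro (h1 | h1); · left; simp only [hc₁]; linarith
        · right; simp only [hc₂]; linarith
      · rintro (h1 | h1); · left; simp only [hc₁] at h1; linarith
        · right; simp only [hc₂] at h1; linarith
  rcases le_or_gt c₂ c₁ with hmerge | hsplit
  · -- merged: one interval
    refine ⟨Icc u v, ∅, ⟨u, v, rfl⟩, ⟨1, 0, by simp [Icc_eq_empty_of_lt]⟩, ?_, by simp, ?_, ?_, by simp, by simp⟩
    · intro t ht
      have htpq : t ∈ Icc p q := ⟨le_trans (le_max_left _ _) ht.1, le_trans ht.2 (min_le_left _ _)⟩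
      have hk := key t htpq
      refine ⟨htpq, ?_, ?_⟩
      · exact hk.1.mpr ⟨le_trans (le_max_right _ _) ht.1, le_trans ht.2 (min_le_right _ _)⟩
      · apply hk.2.mpr
        by_cases h1 : t ≤ c₁; · exact Or.inl h1
        · exact Or.inr (le_trans hmerge (le_of_not_ge h1))
    · intro t ht h1 h2
      left
      have hk := key t ht
      have h3 := hk.1.mp h1
      exact ⟨max_le ht.1 h3.1, le_min ht.2 h3.2⟩
    · -- length bound
      intro s hs t ht
      have hvu : v - u ≤ 4 * α := by
        rcases max_cases p u₀ with ⟨he, hle⟩ | ⟨he, hle⟩ <;> rcases min_cases q v₀ with ⟨he2, hle2⟩ | ⟨he2, hle2⟩ <;>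
          simp only [hu, hv, hu₀, hv₀, hc₁, hc₂] at * <;> rw [he, he2] <;> linarith
      rw [abs_sub_le_iff]
      constructor <;> linarith [hs.1, hs.2, ht.1, ht.2]
  · -- split: two intervals
    refine ⟨Icc u (min v c₁), Icc (max u c₂) v, ⟨_, _, rfl⟩, ⟨_, _, rfl⟩, ?_, ?_, ?_, ?_, ?_, ?_⟩
    · intro t ht
      have htpq : t ∈ Icc p q := ⟨le_trans (le_max_left _ _) ht.1,
        le_trans ht.2 ((min_le_left _ _).trans (min_le_left _ _))⟩
      have hk := key t htpq
      refine ⟨htpq, ?_, ?_⟩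
      · exact hk.1.mpr ⟨le_trans (le_max_right _ _) ht.1,
          le_trans ht.2 ((min_le_left _ _).trans (min_le_right _ _))⟩
      · exact hk.2.mpr (Or.inl (le_trans ht.2 (min_le_right _ _)))
    · intro t ht
      have htpq : t ∈ Icc p q := ⟨le_trans (le_max_left _ _) (le_trans (le_max_left _ _) ht.1),
        le_trans ht.2 (min_le_left _ _)⟩
      have hk := key t htpq
      refine ⟨htpq, ?_, ?_⟩
      · exact hk.1.mpr ⟨le_trans (le_max_right _ _) (le_trans (le_max_left _ _) ht.1),
          le_trans ht.2 (min_le_right _ _)⟩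
      · exact hk.2.mpr (Or.inr (le_trans (le_max_right _ _) ht.1))
    · intro t ht h1 h2
      have hk := key t ht
      have h3 := hk.1.mp h1
      have h4 := hk.2.mp h2
      have htu : u ≤ t := max_le ht.1 h3.1
      have htv : t ≤ v := le_min ht.2 h3.2
      rcases h4 with h4 | h4
      · exact Or.inl ⟨htu, le_min htv h4⟩
      · exact Or.inr ⟨max_le htu h4, htv⟩
    · intro s hs t ht
      have h1 : ∀ w ∈ Icc u (min v c₁), u₀ ≤ w ∧ w ≤ c₁ := fun w hw =>
        ⟨le_trans (le_max_right _ _) hw.1, le_trans hw.2 (min_le_right _ _)⟩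
      have hs' := h1 s hs; have ht' := h1 t ht
      have : c₁ - u₀ = 2 * α := by simp only [hc₁, hu₀]; ring
      rw [abs_sub_le_iff]; constructor <;> linarith [hs'.1, hs'.2, ht'.1, ht'.2]
    · intro s hs t ht
      have h1 : ∀ w ∈ Icc (max u c₂) v, c₂ ≤ w ∧ w ≤ v₀ := fun w hw =>
        ⟨le_trans (le_max_right _ _) hw.1, le_trans hw.2 (min_le_right _ _)⟩
      have hs' := h1 s hs; have ht' := h1 t ht
      have : v₀ - c₂ = 2 * α := by simp only [hv₀, hc₂]; ring
      rw [abs_sub_le_iff]; constructor <;> linarith [hs'.1, hs'.2, ht'.1, ht'.2]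
    · rw [eq_empty_iff_forall_notMem]
      rintro t ⟨⟨hu1, hv1⟩, ⟨hu2, hv2⟩⟩
      have h1 : t ≤ c₁ := le_trans hv1 (min_le_right _ _)
      have h2 : c₂ ≤ t := le_trans (le_max_right _ _) hu2
      linarith


variable {G : Type*} [MetricSpace G] (M : MetricGraphStruct G)

variable {G : Type*} [MetricSpace G] (M : MetricGraphStruct G)

theorem MGS_param_dist (e : M.E) {s t : ℝ} (hs : s ∈ Icc 0 (M.len e))
    (ht : t ∈ Icc 0 (M.len e)) : dist (M.param e s) (M.param e t) ≤ |s - t| := by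
  have := lipschitzOnWith_iff_dist_le_mul.mp (M.param_lipschitz e) s hs t ht
  simpa [Real.dist_eq] using this

theorem MGS_ext (r : G) (e : M.E) (g : ℝ → ℝ)
    (hg : ∀ s t : ℝ, |g s - g t| ≤ |s - t|)
    (hg0 : g 0 = dist r (M.param e 0))
    (hgL : g (M.len e) = dist r (M.param e (M.len e))) :
    ∃ f : G → ℝ, (∀ t ∈ Icc 0 (M.len e), f (M.param e t) = g t) ∧
      (∀ p : G, (∀ s ∈ Ioo 0 (M.len e), M.param e s ≠ p) → f p = dist r p) ∧
      (∀ p q : G, |f p - f q| ≤ dist p q) := by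
  classical
  set f : G → ℝ := fun p => if h : ∃ s, s ∈ Ioo 0 (M.len e) ∧ M.param e s = p
    then g h.choose else dist r p with hf
  have hfd : ∀ p, f p = if h : ∃ s, s ∈ Ioo 0 (M.len e) ∧ M.param e s = p
    then g h.choose else dist r p := fun p => rfl
  have foff' : ∀ p : G, (∀ s ∈ Ioo 0 (M.len e), M.param e s ≠ p) → f p = dist r p := by
    intro p hp
    rw [hfd, dif_neg]
    rintro ⟨s, hs, hps⟩; exact hp s hs hps
  have fparam : ∀ t ∈ Icc 0 (M.len e), f (M.param e t) = g t := by
    intro t ht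
    rcases eq_or_lt_of_le ht.1 with h0 | h0
    · have h1 : f (M.param e t) = dist r (M.param e t) := by
        apply foff'
        intro s hs hps
        rw [← h0] at hps
        exact (M.endpoint_not_interior e e s hs).1 hps.symm
      rw [h1, ← h0, hg0]
    rcases eq_or_lt_of_le ht.2 with hL0 | hL0
    · have h1 : f (M.param e t) = dist r (M.param e t) := by
        apply foff'
        intro s hs hps
        rw [hL0] at hps
        exact (M.endpoint_not_interior e e s hs).2 hps.symm
      rw [h1, hL0, hgL]
    · have hex : ∃ s, s ∈ Ioo 0 (M.len e) ∧ M.param e s = M.param e t := ⟨t, ⟨h0, hL0⟩, rfl⟩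
      rw [hfd, dif_pos hex]
      have hspec := hex.choose_spec
      have heq : hex.choose = t := M.injOn e hspec.1 ⟨h0, hL0⟩ hspec.2
      rw [heq]
  have foff : ∀ e', e' ≠ e → ∀ t ∈ Icc 0 (M.len e'),
      f (M.param e' t) = dist r (M.param e' t) := by
    intro e' hne' t ht
    apply foff'
    intro s hs hps
    rcases eq_or_lt_of_le ht.1 with h0 | h0
    · rw [← h0] at hps
      exact (M.endpoint_not_interior e' e s hs).1 hps.symm
    rcases eq_or_lt_of_le ht.2 with hL0 | hL0
    · rw [hL0] at hps
      exact (M.endpoint_not_interior e' e s hs).2 hps.symm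
    · exact M.disjoint_interiors e e' (fun h => hne' h.symm) s hs t ⟨h0, hL0⟩ hps
  refine ⟨f, fparam, foff', ?_⟩
  apply M.dist_maximal (fun p q => |f p - f q|)
    (fun p => by simp)
    (fun p q => abs_sub_comm _ _)
    (fun p q s => abs_sub_le _ _ _)
  intro e' s hs t ht
  by_cases he' : e' = e
  · subst he'
    show |f (M.param e' s) - f (M.param e' t)| ≤ |s - t|
    rw [fparam s hs, fparam t ht]
    exact hg s t
  · show |f (M.param e' s) - f (M.param e' t)| ≤ |s - t|
    rw [foff e' he' s hs, foff e' he' t ht]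
    calc |dist r (M.param e' s) - dist r (M.param e' t)|
        = |dist (M.param e' s) r - dist (M.param e' t) r| := by rw [dist_comm r, dist_comm r]
      _ ≤ dist (M.param e' s) (M.param e' t) := abs_dist_sub_le _ _ _
      _ ≤ |s - t| := MGS_param_dist M e' hs ht

theorem MGS_dist_formula (r : G) (e : M.E)
    (hr : ∀ s ∈ Ioo 0 (M.len e), M.param e s ≠ r) :
    ∀ t ∈ Icc 0 (M.len e), dist r (M.param e t)
      = min (dist r (M.param e 0) + t) (dist r (M.param e (M.len e)) + (M.len e - t)) := by
  have hL : 0 < M.len e := M.len_pos e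
  set L := M.len e with hLdef
  set a := dist r (M.param e 0) with ha
  set b := dist r (M.param e L) with hb
  have ha0 : 0 ≤ a := dist_nonneg
  have hb0 : 0 ≤ b := dist_nonneg
  have hmemL : L ∈ Icc (0:ℝ) L := ⟨hL.le, le_refl L⟩
  have hmem0 : (0:ℝ) ∈ Icc (0:ℝ) L := ⟨le_refl 0, hL.le⟩
  have hdL0 : dist (M.param e L) (M.param e 0) ≤ L := by
    have := MGS_param_dist M e hmemL hmem0
    rwa [sub_zero, abs_of_pos hL] at this
  have hd0L : dist (M.param e 0) (M.param e L) ≤ L := by rw [dist_comm]; exact hdL0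
  have hab : a ≤ b + L := le_trans (dist_triangle r (M.param e L) (M.param e 0)) (by linarith)
  have hba : b ≤ a + L := le_trans (dist_triangle r (M.param e 0) (M.param e L)) (by linarith)
  set g : ℝ → ℝ := fun t => min (a + t) (b + (L - t)) with hgdef
  have hg : ∀ s t : ℝ, |g s - g t| ≤ |s - t| := by
    intro s t
    refine le_trans (abs_min_sub_min_le_max _ _ _ _) ?_
    apply max_le
    · apply le_of_eq; congr 1; ring
    · rw [show b + (L - s) - (b + (L - t)) = t - s by ring, abs_sub_comm]
  have hg0 : g 0 = a := by
    simp only [hgdef]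
    rw [add_zero, sub_zero]
    exact min_eq_left hab
  have hgL : g L = b := by
    simp only [hgdef]
    rw [sub_self, add_zero]
    exact min_eq_right hba
  obtain ⟨f, fparam, foff, fdist⟩ := MGS_ext M r e g hg hg0 hgL
  intro t ht
  apply le_antisymm
  · apply le_min
    · calc dist r (M.param e t) ≤ dist r (M.param e 0) + dist (M.param e 0) (M.param e t) :=
          dist_triangle _ _ _
        _ ≤ a + t := by
          have := MGS_param_dist M e hmem0 ht
          rw [abs_sub_comm, sub_zero, abs_of_nonneg ht.1] at this
          linarith
    · calc dist r (M.param e t) ≤ dist r (M.param e L) + dist (M.param e L) (M.param e t) :=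
          dist_triangle _ _ _
        _ ≤ b + (L - t) := by
          have := MGS_param_dist M e hmemL ht
          rw [abs_of_nonneg (by linarith [ht.2] : (0:ℝ) ≤ L - t)] at this
          linarith
  · have h1 := fdist r (M.param e t)
    rw [foff r hr, fparam t ht, dist_self] at h1
    have hgt0 : 0 ≤ g t := le_min (by linarith [ht.1]) (by linarith [ht.2])
    rw [zero_sub, abs_neg, abs_of_nonneg hgt0] at h1
    exact h1

theorem MGS_dist_formula' (r : G) (e : M.E) (t₀ : ℝ) (ht₀ : t₀ ∈ Ioo 0 (M.len e))
    (hrt : M.param e t₀ = r) :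
    ∀ t ∈ Icc 0 (M.len e), dist r (M.param e t)
      = min (min (dist r (M.param e 0) + t) (dist r (M.param e (M.len e)) + (M.len e - t)))
          |t - t₀| := by
  have hL : 0 < M.len e := M.len_pos e
  set L := M.len e with hLdef
  set a := dist r (M.param e 0) with ha
  set b := dist r (M.param e L) with hb
  have ha0 : 0 ≤ a := dist_nonneg
  have hb0 : 0 ≤ b := dist_nonneg
  have hmemL : L ∈ Icc (0:ℝ) L := ⟨hL.le, le_refl L⟩
  have hmem0 : (0:ℝ) ∈ Icc (0:ℝ) L := ⟨le_refl 0, hL.le⟩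
  have hmemt₀ : t₀ ∈ Icc (0:ℝ) L := ⟨ht₀.1.le, ht₀.2.le⟩
  have hdL0 : dist (M.param e L) (M.param e 0) ≤ L := by
    have := MGS_param_dist M e hmemL hmem0
    rwa [sub_zero, abs_of_pos hL] at this
  have hd0L : dist (M.param e 0) (M.param e L) ≤ L := by rw [dist_comm]; exact hdL0
  have hab : a ≤ b + L := le_trans (dist_triangle r (M.param e L) (M.param e 0)) (by linarith)
  have hba : b ≤ a + L := le_trans (dist_triangle r (M.param e 0) (M.param e L)) (by linarith)
  have hat₀ : a ≤ t₀ := by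
    rw [ha, ← hrt]
    have := MGS_param_dist M e hmemt₀ hmem0
    rwa [sub_zero, abs_of_pos ht₀.1] at this
  have hbt₀ : b ≤ L - t₀ := by
    rw [hb, ← hrt]
    have := MGS_param_dist M e hmemt₀ hmemL
    rwa [abs_of_nonpos (by linarith [ht₀.2] : t₀ - L ≤ 0), neg_sub] at this
  set g : ℝ → ℝ := fun t => min (min (a + t) (b + (L - t))) |t - t₀| with hgdef
  have hg : ∀ s t : ℝ, |g s - g t| ≤ |s - t| := by
    intro s t
    refine le_trans (abs_min_sub_min_le_max _ _ _ _) ?_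
    apply max_le
    · refine le_trans (abs_min_sub_min_le_max _ _ _ _) ?_
      apply max_le
      · apply le_of_eq; congr 1; ring
      · rw [show b + (L - s) - (b + (L - t)) = t - s by ring, abs_sub_comm]
    · refine le_trans (abs_abs_sub_abs_le_abs_sub _ _) ?_
      apply le_of_eq; congr 1; ring
  have hg0 : g 0 = a := by
    simp only [hgdef]
    rw [add_zero, sub_zero, zero_sub, abs_neg, abs_of_pos ht₀.1]
    rw [min_eq_left hab]
    exact min_eq_left hat₀
  have hgL : g L = b := by
    simp only [hgdef]
    rw [sub_self, add_zero, abs_of_nonneg (by linarith [ht₀.2] : (0:ℝ) ≤ L - t₀)]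
    rw [min_eq_right hba]
    exact min_eq_left hbt₀
  obtain ⟨f, fparam, foff, fdist⟩ := MGS_ext M r e g hg hg0 hgL
  intro t ht
  apply le_antisymm
  · apply le_min
    · apply le_min
      · calc dist r (M.param e t) ≤ dist r (M.param e 0) + dist (M.param e 0) (M.param e t) :=
            dist_triangle _ _ _
          _ ≤ a + t := by
            have := MGS_param_dist M e hmem0 ht
            rw [abs_sub_comm, sub_zero, abs_of_nonneg ht.1] at this
            linarith
      · calc dist r (M.param e t) ≤ dist r (M.param e L) + dist (M.param e L) (M.param e t) :=
            dist_triangle _ _ _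
          _ ≤ b + (L - t) := by
            have := MGS_param_dist M e hmemL ht
            rw [abs_of_nonneg (by linarith [ht.2] : (0:ℝ) ≤ L - t)] at this
            linarith
    · rw [← hrt]
      have := MGS_param_dist M e hmemt₀ ht
      rwa [abs_sub_comm] at this
  · have h1 := fdist (M.param e t₀) (M.param e t)
    rw [fparam t₀ hmemt₀, fparam t ht] at h1
    have hgt₀ : g t₀ = 0 := by
      simp only [hgdef]
      rw [sub_self, abs_zero]
      exact min_eq_right (le_min (by linarith [ht₀.1]) (by linarith [ht₀.2]))
    rw [hgt₀, zero_sub, abs_neg] at h1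
    have hgt0 : 0 ≤ g t := le_min (le_min (by linarith [ht.1]) (by linarith [ht.2]))
      (abs_nonneg _)
    rw [abs_of_nonneg hgt0] at h1
    rw [← hrt]
    exact h1

theorem edge_pieces (r : G) (d α : ℝ) (hα : 0 < α) (hdα : α < d) (e : M.E) :
    ∃ J : Fin 5 → Set ℝ,
      (∀ k, ∃ u v, J k = Icc u v) ∧
      (∀ k, J k ⊆ Icc 0 (M.len e)) ∧
      (∀ t ∈ Icc 0 (M.len e),
        (d - α ≤ dist r (M.param e t) ∧ dist r (M.param e t) ≤ d + α) → ∃ k, t ∈ J k) ∧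
      (∀ k, ∀ s ∈ J k, ∀ t ∈ J k, |s - t| ≤ 4 * α) ∧
      (∀ k k', k ≠ k' → ∀ s, s ∈ J k → s ∈ J k' →
        ¬(d - α ≤ dist r (M.param e s) ∧ dist r (M.param e s) ≤ d + α)) ∧
      (∀ k, (0:ℝ) ∈ J k → M.len e ∈ J k → M.len e ≤ 4 * α) ∧
      (∀ k k', ((0:ℝ) ∈ J k ∧ M.len e ∈ J k) → ((0:ℝ) ∈ J k' ∧ M.len e ∈ J k') → k = k') := by
  classical
  have hL : 0 < M.len e := M.len_pos e
  set L := M.len e with hLdef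
  set a := dist r (M.param e 0) with ha
  set b := dist r (M.param e L) with hb
  have ha0 : 0 ≤ a := dist_nonneg
  have hb0 : 0 ≤ b := dist_nonneg
  have hE : Icc (1:ℝ) 0 = ∅ := Icc_eq_empty (by norm_num)
  by_cases hfull : ∀ t ∈ Icc (0:ℝ) L, d - α ≤ dist r (M.param e t) ∧ dist r (M.param e t) ≤ d + α
  · -- whole edge inside the band
    have hr : ∀ s ∈ Ioo (0:ℝ) L, M.param e s ≠ r := by
      intro s hs hps
      have := (hfull s ⟨hs.1.le, hs.2.le⟩).1
      rw [hps, dist_self] at this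
      linarith
    have hform := MGS_dist_formula M r e hr
    have hL4 : L ≤ 4 * α := by
      have hmid : L / 2 ∈ Icc (0:ℝ) L := ⟨by linarith, by linarith⟩
      have h1 := (hfull (L/2) hmid).2
      rw [hform (L/2) hmid] at h1
      have h2 := (hfull 0 ⟨le_refl 0, hL.le⟩).1
      have h3 := (hfull L ⟨hL.le, le_refl L⟩).1
      rcases min_le_iff.mp h1 with h4 | h4 <;> linarith
    refine ⟨fun k => if k = 0 then Icc 0 L else Icc 1 0, ?_, ?_, ?_, ?_, ?_, ?_, ?_⟩
    · intro k
      by_cases hk : k = 0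
      · exact ⟨0, L, by simp [hk]⟩
      · exact ⟨1, 0, by simp [hk]⟩
    · intro k; by_cases hk : k = 0 <;> simp [hk, hE]
    · intro t ht _; exact ⟨0, by simp [ht]⟩
    · intro k s hs t ht
      by_cases hk : k = 0 <;> simp [hk, hE] at hs ht
      · rw [abs_sub_le_iff]; constructor <;> linarith [hs.1, hs.2, ht.1, ht.2]
    · intro k k' hkk' s hsk hsk'
      exfalso
      by_cases hk : k = 0 <;> by_cases hk' : k' = 0 <;>
        simp [hk, hk', hE] at hsk hsk' hkk'
    · intro k _ _; exact hL4
    · intro k k' h1 h2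
      by_cases hk : k = 0 <;> by_cases hk' : k' = 0 <;>
        simp [hk, hk', hE] at h1 h2 ⊢
  · by_cases hsing : ∃ t₀ ∈ Ioo (0:ℝ) L, M.param e t₀ = r
    · -- r lies in the interior of the edge: two segments
      obtain ⟨t₀, ht₀, hrt⟩ := hsing
      have hform := MGS_dist_formula' M r e t₀ ht₀ hrt
      have hrband : ¬(d - α ≤ dist r (M.param e t₀) ∧ dist r (M.param e t₀) ≤ d + α) := by
        rw [hrt, dist_self]
        rintro ⟨h1, _⟩; linarith
      have form1 : ∀ t ∈ Icc (0:ℝ) t₀, dist r (M.param e t)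
          = min (a + (t - 0)) (0 + (t₀ - t)) := by
        intro t ht
        have htL : t ∈ Icc (0:ℝ) L := ⟨ht.1, ht.2.trans ht₀.2.le⟩
        rw [hform t htL]
        have h1 : |t - t₀| = t₀ - t := by
          rw [abs_of_nonpos (by linarith [ht.2])]; ring
        rw [h1, min_assoc]
        have h2 : min (b + (L - t)) (t₀ - t) = t₀ - t :=
          min_eq_right (by linarith [ht₀.2.le])
        rw [h2]
        congr 1 <;> ring
      have form2 : ∀ t ∈ Icc t₀ L, dist r (M.param e t)
          = min (0 + (t - t₀)) (b + (L - t)) := by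
        intro t ht
        have htL : t ∈ Icc (0:ℝ) L := ⟨ht₀.1.le.trans ht.1, ht.2⟩
        rw [hform t htL]
        have h1 : |t - t₀| = t - t₀ := abs_of_nonneg (by linarith [ht.1])
        rw [h1]
        have h2 : min (min (a + t) (b + (L - t))) (t - t₀)
            = min (0 + (t - t₀)) (b + (L - t)) := by
          rw [min_comm (a + t) (b + (L - t)), min_assoc]
          have h3 : min (a + t) (t - t₀) = t - t₀ :=
            min_eq_right (by linarith [htL.1, ht₀.1.le])
          rw [h3, min_comm, zero_add]
        rw [h2]
      obtain ⟨J₁, J₂, hI1, hI2, hsub1, hsub2, hcov1, hlen1, hlen2, hdisj1⟩ :=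
        segment_pieces a 0 0 t₀ d α _ form1
      obtain ⟨J₃, J₄, hI3, hI4, hsub3, hsub4, hcov2, hlen3, hlen4, hdisj2⟩ :=
        segment_pieces 0 b t₀ L d α _ form2
      refine ⟨![Icc 1 0, J₁, J₂, J₃, J₄], ?_, ?_, ?_, ?_, ?_, ?_, ?_⟩
      · intro k; fin_cases k
        · exact ⟨1, 0, by simp⟩
        · simpa using hI1
        · simpa using hI2
        · simpa using hI3
        · simpa using hI4
      · intro k; fin_cases k <;> simp [hE] <;> intro t ht
        · exact ⟨(hsub1 t ht).1.1, (hsub1 t ht).1.2.trans ht₀.2.le⟩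
        · exact ⟨(hsub2 t ht).1.1, (hsub2 t ht).1.2.trans ht₀.2.le⟩
        · exact ⟨ht₀.1.le.trans (hsub3 t ht).1.1, (hsub3 t ht).1.2⟩
        · exact ⟨ht₀.1.le.trans (hsub4 t ht).1.1, (hsub4 t ht).1.2⟩
      · intro t ht hband
        rcases le_total t t₀ with hc | hc
        · rcases hcov1 t ⟨ht.1, hc⟩ hband.1 hband.2 with h | h
          · exact ⟨1, by simpa using h⟩
          · exact ⟨2, by simpa using h⟩
        · rcases hcov2 t ⟨hc, ht.2⟩ hband.1 hband.2 with h | h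
          · exact ⟨3, by simpa using h⟩
          · exact ⟨4, by simpa using h⟩
      · intro k; fin_cases k <;> simp [hE]
        exacts [hlen1, hlen2, hlen3, hlen4]
      · intro k k' hkk' s hsk hsk' hband
        have hmem : ∀ (T : Set ℝ), T = J₁ ∨ T = J₂ → s ∈ T → s ≤ t₀ := by
          rintro T (rfl | rfl) hsT
          exacts [(hsub1 s hsT).1.2, (hsub2 s hsT).1.2]
        have hmem' : ∀ (T : Set ℝ), T = J₃ ∨ T = J₄ → s ∈ T → t₀ ≤ s := by
          rintro T (rfl | rfl) hsT
          exacts [(hsub3 s hsT).1.1, (hsub4 s hsT).1.1]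
        -- helper: if s in a left piece and a right piece then s = t₀, contradicting band
        have hst₀ : ∀ (T T' : Set ℝ), (T = J₁ ∨ T = J₂) → (T' = J₃ ∨ T' = J₄) →
            s ∈ T → s ∈ T' → False := by
          intro T T' h1 h2 hsT hsT'
          have : s = t₀ := le_antisymm (hmem T h1 hsT) (hmem' T' h2 hsT')
          rw [this] at hband
          exact hrband hband
        fin_cases k <;> fin_cases k' <;> simp [hE] at hsk hsk' hkk' ⊢
        -- all same-side pairs use disjointness, cross pairs use hst₀
        · exact absurd (mem_inter hsk hsk') (by rw [hdisj1]; simp)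
        · exact hst₀ J₁ J₃ (Or.inl rfl) (Or.inl rfl) hsk hsk'
        · exact hst₀ J₁ J₄ (Or.inl rfl) (Or.inr rfl) hsk hsk'
        · exact absurd (mem_inter hsk' hsk) (by rw [hdisj1]; simp)
        · exact hst₀ J₂ J₃ (Or.inr rfl) (Or.inl rfl) hsk hsk'
        · exact hst₀ J₂ J₄ (Or.inr rfl) (Or.inr rfl) hsk hsk'
        · exact hst₀ J₁ J₃ (Or.inl rfl) (Or.inl rfl) hsk' hsk
        · exact hst₀ J₂ J₃ (Or.inr rfl) (Or.inl rfl) hsk' hsk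
        · exact absurd (mem_inter hsk hsk') (by rw [hdisj2]; simp)
        · exact hst₀ J₁ J₄ (Or.inl rfl) (Or.inr rfl) hsk' hsk
        · exact hst₀ J₂ J₄ (Or.inr rfl) (Or.inr rfl) hsk' hsk
        · exact absurd (mem_inter hsk' hsk) (by rw [hdisj2]; simp)
      · intro k h0k hLk
        exfalso
        fin_cases k <;> simp [hE] at h0k hLk
        · exact absurd ((hsub1 L hLk).1.2.trans_lt ht₀.2).false (by simp [lt_irrefl])
        · exact absurd ((hsub2 L hLk).1.2.trans_lt ht₀.2).false (by simp [lt_irrefl])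
        · exact absurd (ht₀.1.trans_le (hsub3 0 h0k).1.1).false (by simp [lt_irrefl])
        · exact absurd (ht₀.1.trans_le (hsub4 0 h0k).1.1).false (by simp [lt_irrefl])
      · intro k k' h1 h2
        exfalso
        fin_cases k <;> simp [hE] at h1
        · exact absurd ((hsub1 L h1.2).1.2.trans_lt ht₀.2).false (by simp [lt_irrefl])
        · exact absurd ((hsub2 L h1.2).1.2.trans_lt ht₀.2).false (by simp [lt_irrefl])
        · exact absurd (ht₀.1.trans_le (hsub3 0 h1.1).1.1).false (by simp [lt_irrefl])
        · exact absurd (ht₀.1.trans_le (hsub4 0 h1.1).1.1).false (by simp [lt_irrefl])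
    · -- r not in the interior: single segment
      push_neg at hsing
      have hform := MGS_dist_formula M r e hsing
      have form1 : ∀ t ∈ Icc (0:ℝ) L, dist r (M.param e t)
          = min (a + (t - 0)) (b + (L - t)) := by
        intro t ht
        rw [hform t ht]
        congr 2
        ring
      obtain ⟨J₁, J₂, hI1, hI2, hsub1, hsub2, hcov1, hlen1, hlen2, hdisj1⟩ :=
        segment_pieces a b 0 L d α _ form1
      have hnotboth : ∀ (T : Set ℝ), (T = J₁ ∨ T = J₂) → (0:ℝ) ∈ T → L ∈ T → False := by
        rintro T hT h0 hLm
        obtain ⟨u, v, rfl⟩ : ∃ u v, T = Icc u v := by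
          rcases hT with rfl | rfl
          exacts [hI1, hI2]
        have hsubT : ∀ t ∈ Icc u v, t ∈ Icc (0:ℝ) L ∧ d - α ≤ dist r (M.param e t) ∧
            dist r (M.param e t) ≤ d + α := by
          rcases hT with rfl | rfl
          exacts [hsub1, hsub2]
        apply hfull
        intro t ht
        have : t ∈ Icc u v := ⟨h0.1.trans ht.1, ht.2.trans hLm.2⟩
        exact (hsubT t this).2
      refine ⟨![Icc 1 0, J₁, J₂, Icc 1 0, Icc 1 0], ?_, ?_, ?_, ?_, ?_, ?_, ?_⟩
      · intro k; fin_cases k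
        · exact ⟨1, 0, by simp⟩
        · simpa using hI1
        · simpa using hI2
        · exact ⟨1, 0, by simp⟩
        · exact ⟨1, 0, by simp⟩
      · intro k; fin_cases k <;> simp [hE] <;> intro t ht
        · exact (hsub1 t ht).1
        · exact (hsub2 t ht).1
      · intro t ht hband
        rcases hcov1 t ht hband.1 hband.2 with h | h
        · exact ⟨1, by simpa using h⟩
        · exact ⟨2, by simpa using h⟩
      · intro k; fin_cases k <;> simp [hE]
        exacts [hlen1, hlen2]
      · intro k k' hkk' s hsk hsk' hband
        fin_cases k <;> fin_cases k' <;> simp [hE] at hsk hsk' hkk' ⊢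
        · exact absurd (mem_inter hsk hsk') (by rw [hdisj1]; simp)
        · exact absurd (mem_inter hsk' hsk) (by rw [hdisj1]; simp)
      · intro k h0k hLk
        exfalso
        fin_cases k <;> simp [hE] at h0k hLk
        · exact hnotboth J₁ (Or.inl rfl) h0k hLk
        · exact hnotboth J₂ (Or.inr rfl) h0k hLk
      · intro k k' h1 h2
        exfalso
        fin_cases k <;> simp [hE] at h1
        · exact hnotboth J₁ (Or.inl rfl) h1.1 h1.2
        · exact hnotboth J₂ (Or.inr rfl) h1.1 h1.2

end AuxLemmas

theorem cover_dist_bound {G : Type*} [MetricSpace G] {ι : Type} [Fintype ι]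
    (C : Set G) (hC : IsPreconnected C)
    (F : ι → Set G) (hFc : ∀ i, IsClosed (F i)) (hcov : C ⊆ ⋃ i, F i)
    (fullB : ι → Bool) (gate : ι → G) (α N : ℝ) (hα : 0 ≤ α)
    (hdiam : ∀ i, ∀ p ∈ F i, ∀ q ∈ F i, dist p q ≤ 4 * α)
    (hgate : ∀ i, fullB i = false → ∀ j, j ≠ i → C ∩ F i ∩ F j ⊆ {gate i})
    (hcount : ∀ l : List ι, l.Nodup → (∀ i ∈ l, fullB i = true) → (l.length : ℝ) ≤ N)
    (y z : G) (hy : y ∈ C) (hz : z ∈ C) :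
    dist y z ≤ 8 * α + 4 * α * N := by
  classical
  have hN : (0:ℝ) ≤ N := by simpa using hcount [] (by simp) (by simp)
  have hsymm : Symmetric (fun i j : ι => i ≠ j ∧ (C ∩ F i ∩ F j).Nonempty) := by
    rintro i j ⟨hne, p, hp⟩
    exact ⟨hne.symm, p, ⟨hp.1.1, hp.2⟩, hp.1.2⟩
  set Γ : SimpleGraph ι :=
    ⟨fun i j => i ≠ j ∧ (C ∩ F i ∩ F j).Nonempty, ⟨fun a b h => hsymm h⟩, ⟨fun i h => h.1 rfl⟩⟩ with hΓ
  have hadjdef : ∀ i j, Γ.Adj i j ↔ (i ≠ j ∧ (C ∩ F i ∩ F j).Nonempty) := fun i j => Iff.rfl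
  obtain ⟨i₀, hyF⟩ : ∃ i, y ∈ F i := by simpa using hcov hy
  -- reachability from i₀ to a piece containing z
  have hreach : ∃ j₀, z ∈ F j₀ ∧ Γ.Reachable i₀ j₀ := by
    by_contra hcon
    push_neg at hcon
    set U : Set G := ⋃ i ∈ {i | Γ.Reachable i₀ i}, F i with hU
    set V : Set G := ⋃ i ∈ {i | ¬ Γ.Reachable i₀ i}, F i with hV
    have hUc : IsClosed U := (Set.toFinite _).isClosed_biUnion (fun i _ => hFc i)
    have hVc : IsClosed V := (Set.toFinite _).isClosed_biUnion (fun i _ => hFc i)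
    have hCUV : C ⊆ U ∪ V := by
      intro p hp
      rcases mem_iUnion.mp (hcov hp) with ⟨i, hi⟩
      by_cases h : Γ.Reachable i₀ i
      · exact Or.inl (mem_biUnion h hi)
      · exact Or.inr (mem_biUnion h hi)
    have hyU : (C ∩ U).Nonempty := ⟨y, hy, mem_biUnion (SimpleGraph.Reachable.refl i₀) hyF⟩
    have hzV : (C ∩ V).Nonempty := by
      rcases mem_iUnion.mp (hcov hz) with ⟨j, hj⟩
      exact ⟨z, hz, mem_biUnion (hcon j hj) hj⟩
    obtain ⟨p, hpC, hpUV⟩ := isPreconnected_closed_iff.mp hC U V hUc hVc hCUV hyU hzV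
    obtain ⟨i, hiR, hpFi⟩ := mem_iUnion₂.mp hpUV.1
    obtain ⟨j, hjR, hpFj⟩ := mem_iUnion₂.mp hpUV.2
    have hne : i ≠ j := fun h => hjR (h ▸ hiR)
    have hadj : Γ.Adj i j := ⟨hne, p, ⟨hpC, hpFi⟩, hpFj⟩
    exact hjR (hiR.trans hadj.reachable)
  obtain ⟨j₀, hzF, hR⟩ := hreach
  obtain ⟨w0⟩ := hR
  obtain ⟨wp, hpath⟩ := w0.toPath
  -- telescoping along the walk
  have htele : ∀ (i j : ι) (w : Γ.Walk i j) (q : G), q ∈ C → q ∈ F i → z ∈ F j →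
      (fullB i = true ∨ q = gate i) →
      dist q z ≤ 4 * α + 4 * α * ((w.support.filter (fun i' => fullB i')).length : ℝ) := by
    intro i j w
    induction w with
    | nil =>
      rename_i u
      intro q hqC hqF hzF _
      have h1 : dist q z ≤ 4 * α := hdiam _ q hqF z hzF
      have h2 : (0:ℝ) ≤ 4 * α * ((((SimpleGraph.Walk.nil : Γ.Walk u u)).support.filter
          (fun i' => fullB i')).length : ℝ) := by positivity
      linarith
    | @cons i i₁ j hadj w ih =>
      intro q hqC hqF hzF hstart
      obtain ⟨q', hq'⟩ := hadj.2
      have hq'C : q' ∈ C := hq'.1.1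
      have hq'Fi : q' ∈ F i := hq'.1.2
      have hq'Fi₁ : q' ∈ F i₁ := hq'.2
      have hnext : fullB i₁ = true ∨ q' = gate i₁ := by
        cases hfull : fullB i₁ with
        | true => exact Or.inl rfl
        | false =>
          exact Or.inr (hgate i₁ hfull i hadj.1 ⟨⟨hq'C, hq'Fi₁⟩, hq'Fi⟩)
      have ihq := ih q' hq'C hq'Fi₁ hzF hnext
      have hstep : dist q z ≤ dist q q' + dist q' z := dist_triangle _ _ _
      cases hfi : fullB i with
      | true =>
        have h1 : dist q q' ≤ 4 * α := hdiam i q hqF q' hq'Fi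
        have h2 : (((SimpleGraph.Walk.cons hadj w).support.filter
            (fun i' => fullB i')).length : ℝ)
            = ((w.support.filter (fun i' => fullB i')).length : ℝ) + 1 := by
          rw [SimpleGraph.Walk.support_cons, List.filter_cons]
          simp [hfi]
        rw [h2]
        linarith
      | false =>
        have hq : q = gate i := by
          rcases hstart with h | h
          · rw [hfi] at h; exact absurd h (by simp)
          · exact h
        have hq'g : q' = gate i := hgate i hfi i₁ hadj.1.symm ⟨⟨hq'C, hq'Fi⟩, hq'Fi₁⟩
        have h1 : dist q q' = 0 := by rw [hq, hq'g, dist_self]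
        have h2 : (((SimpleGraph.Walk.cons hadj w).support.filter
            (fun i' => fullB i')).length : ℝ)
            = ((w.support.filter (fun i' => fullB i')).length : ℝ) := by
          rw [SimpleGraph.Walk.support_cons, List.filter_cons]
          simp [hfi]
        rw [h2]
        linarith
  -- top level
  cases wp with
  | nil =>
    have h1 : dist y z ≤ 4 * α := hdiam i₀ y hyF z hzF
    nlinarith
  | @cons _ i₁ _ hadj w' =>
    obtain ⟨q, hq⟩ := hadj.2
    have hqC : q ∈ C := hq.1.1
    have hqFi : q ∈ F i₀ := hq.1.2
    have hqFi₁ : q ∈ F i₁ := hq.2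
    have hnext : fullB i₁ = true ∨ q = gate i₁ := by
      cases hfull : fullB i₁ with
      | true => exact Or.inl rfl
      | false =>
        exact Or.inr (hgate i₁ hfull i₀ hadj.1 ⟨⟨hqC, hqFi₁⟩, hqFi⟩)
    have h1 : dist y q ≤ 4 * α := hdiam i₀ y hyF q hqFi
    have h2 := htele i₁ j₀ w' q hqC hqFi₁ hzF hnext
    have hnodup : w'.support.Nodup := by
      have := hpath.support_nodup
      rw [SimpleGraph.Walk.support_cons] at this
      exact this.of_cons
    have hcnt : ((w'.support.filter (fun i' => fullB i')).length : ℝ) ≤ N := by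
      apply hcount
      · exact hnodup.filter _
      · intro i hi
        exact (List.mem_filter.mp hi).2
    calc dist y z ≤ dist y q + dist q z := dist_triangle _ _ _
      _ ≤ 4 * α + (4 * α + 4 * α * ((w'.support.filter (fun i' => fullB i')).length : ℝ)) := by
          linarith
      _ ≤ 8 * α + 4 * α * N := by nlinarith


/-- In a connected finite metric graph, any connected component `B` of the band
`B_{d,α} = {x : d - α ≤ d_G(r,x) ≤ d + α}` has diameter at most `4 (2 + N_E(4α)) α`,
where `N_E(4α)` is the number of edges of length at most `4α`. -/
theorem band_component_diameter {G : Type*} [MetricSpace G] [ConnectedSpace G]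
    (M : MetricGraphStruct G) (r : G) (α : ℝ) (hα : 0 < α) (d : ℝ) (hd : 0 < d)
    (x : G) (hx : x ∈ {y : G | d - α ≤ dist r y ∧ dist r y ≤ d + α}) :
    Metric.diam
        (connectedComponentIn {y : G | d - α ≤ dist r y ∧ dist r y ≤ d + α} x) ≤
      4 * (2 + (M.NE (4 * α) : ℝ)) * α := by
  classical
  set band : Set G := {y : G | d - α ≤ dist r y ∧ dist r y ≤ d + α} with hband
  set C : Set G := connectedComponentIn band x with hC
  have hCband : C ⊆ band := connectedComponentIn_subset _ _
  have hN0 : (0:ℝ) ≤ (M.NE (4 * α) : ℝ) := Nat.cast_nonneg _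
  have hRHS : (0:ℝ) ≤ 4 * (2 + (M.NE (4 * α) : ℝ)) * α := by positivity
  apply Metric.diam_le_of_forall_dist_le hRHS
  intro y hy z hz
  by_cases hdα : d ≤ α
  · -- trivial case: the band is contained in a small ball around r
    have hyb := hCband hy
    have hzb := hCband hz
    have h1 : dist y z ≤ dist y r + dist r z := dist_triangle _ _ _
    have h2 : dist y r ≤ d + α := by rw [dist_comm]; exact hyb.2
    have h3 : dist r z ≤ d + α := hzb.2
    nlinarith
  push_neg at hdα
  -- main case
  haveI : Fintype M.E := M.fintypeE
  choose J hJ1 hJ2 hJ3 hJ4 hJ5 hJ6 hJ7 using edge_pieces M r d α hα hdα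
  set F : M.E × Fin 5 → Set G := fun i => M.param i.1 '' (J i.1 i.2) with hF
  set fullB : M.E × Fin 5 → Bool :=
    fun i => decide ((0:ℝ) ∈ J i.1 i.2 ∧ M.len i.1 ∈ J i.1 i.2) with hfullB
  set gate : M.E × Fin 5 → G :=
    fun i => if (0:ℝ) ∈ J i.1 i.2 then M.param i.1 0 else M.param i.1 (M.len i.1) with hgatedef
  have key := cover_dist_bound C isPreconnected_connectedComponentIn F ?_ ?_
    fullB gate α (M.NE (4 * α) : ℝ) hα.le ?_ ?_ ?_ y z hy hz
  · refine key.trans (le_of_eq ?_)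
    ring
  · -- closedness
    intro i
    obtain ⟨u, v, huv⟩ := hJ1 i.1 i.2
    have hcont : ContinuousOn (M.param i.1) (J i.1 i.2) :=
      (M.param_lipschitz i.1).continuousOn.mono (hJ2 i.1 i.2)
    have : IsCompact (F i) := by
      rw [hF]
      dsimp only
      rw [huv] at hcont ⊢
      exact isCompact_Icc.image_of_continuousOn hcont
    exact this.isClosed
  · -- cover
    intro p hp
    obtain ⟨e, t, ht, heq⟩ := M.cover p
    have hpb : p ∈ band := hCband hp
    rw [hband, mem_setOf_eq, ← heq] at hpb
    obtain ⟨k, hk⟩ := hJ3 e t ht hpb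
    exact mem_iUnion.mpr ⟨(e, k), t, hk, heq⟩
  · -- diameters ≤ 4α
    rintro i p ⟨s, hs, rfl⟩ q ⟨t, ht, rfl⟩
    calc dist (M.param i.1 s) (M.param i.1 t) ≤ |s - t| :=
        MGS_param_dist M i.1 (hJ2 i.1 i.2 hs) (hJ2 i.1 i.2 ht)
      _ ≤ 4 * α := hJ4 i.1 i.2 s hs t ht
  · -- gate property
    rintro i hfi j hji p ⟨⟨hpC, s, hsJ, hps⟩, s', hs'J, hps'⟩
    have hfi' : ¬((0:ℝ) ∈ J i.1 i.2 ∧ M.len i.1 ∈ J i.1 i.2) := by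
      intro hcon
      rw [hfullB] at hfi
      simp only [decide_eq_false_iff_not] at hfi
      exact hfi hcon
    have hpb : p ∈ band := hCband hpC
    have hsI : s ∈ Icc 0 (M.len i.1) := hJ2 i.1 i.2 hsJ
    have hs'I : s' ∈ Icc 0 (M.len j.1) := hJ2 j.1 j.2 hs'J
    have hbandS : d - α ≤ dist r (M.param i.1 s) ∧ dist r (M.param i.1 s) ≤ d + α := by
      rw [hps]; exact hpb
    by_cases hsIoo : s ∈ Ioo 0 (M.len i.1)
    · exfalso
      by_cases hs'Ioo : s' ∈ Ioo 0 (M.len j.1)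
      · by_cases hee : i.1 = j.1
        · -- same edge, both interior: equal params, contradiction with hJ5
          have hkk : i.2 ≠ j.2 := by
            intro h2
            exact hji (Prod.ext hee.symm h2.symm)
          have hs'Ioo2 : s' ∈ Ioo 0 (M.len i.1) := by rw [hee]; exact hs'Ioo
          have heq : M.param i.1 s = M.param i.1 s' := by
            rw [hps, show M.param i.1 s' = M.param j.1 s' by rw [hee]]
            exact hps'.symm
          have hss' : s = s' := M.injOn i.1 hsIoo hs'Ioo2 heq
          have hs'J2 : s ∈ J i.1 j.2 := by
            rw [hss']
            have : J j.1 j.2 = J i.1 j.2 := by rw [hee]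
            rw [← this]
            exact hs'J
          exact hJ5 i.1 i.2 j.2 hkk s hsJ hs'J2 hbandS
        · exact M.disjoint_interiors i.1 j.1 hee s hsIoo s' hs'Ioo (hps.trans hps'.symm)
      · -- s' is an endpoint of edge j.1, but p is interior of i.1
        rcases eq_or_lt_of_le hs'I.1 with h0 | h0
        · exact (M.endpoint_not_interior j.1 i.1 s hsIoo).1 (by rw [← h0] at hps'; rw [hps', hps])
        rcases eq_or_lt_of_le hs'I.2 with hL0 | hL0
        · exact (M.endpoint_not_interior j.1 i.1 s hsIoo).2 (by rw [hL0] at hps'; rw [hps', hps])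
        · exact hs'Ioo ⟨h0, hL0⟩
    · -- s is an endpoint of i.1 : p is the gate
      rcases eq_or_lt_of_le hsI.1 with h0 | h0
      · have h0J : (0:ℝ) ∈ J i.1 i.2 := by rw [h0]; exact hsJ
        have : gate i = M.param i.1 0 := by rw [hgatedef]; exact if_pos h0J
        rw [mem_singleton_iff, this, ← hps, ← h0]
      rcases eq_or_lt_of_le hsI.2 with hL0 | hL0
      · have hLJ : M.len i.1 ∈ J i.1 i.2 := by rw [← hL0]; exact hsJ
        have h0J : (0:ℝ) ∉ J i.1 i.2 := fun hcon => hfi' ⟨hcon, hLJ⟩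
        have : gate i = M.param i.1 (M.len i.1) := by rw [hgatedef]; exact if_neg h0J
        rw [mem_singleton_iff, this, ← hps, hL0]
      · exact absurd ⟨h0, hL0⟩ hsIoo
  · -- counting full pieces
    intro l hnodup hfulls
    have hfull' : ∀ i ∈ l, (0:ℝ) ∈ J i.1 i.2 ∧ M.len i.1 ∈ J i.1 i.2 := by
      intro i hi
      have := hfulls i hi
      rw [hfullB] at this
      simpa only [decide_eq_true_eq] using this
    have hmapnd : (l.map Prod.fst).Nodup := by
      apply List.Nodup.map_on ?_ hnodup
      intro i hi i' hi' hfst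
      have h1 := hfull' i hi
      have h2 := hfull' i' hi'
      have h2' : (0:ℝ) ∈ J i.1 i'.2 ∧ M.len i.1 ∈ J i.1 i'.2 := by
        rw [← hfst] at h2
        exact h2
      have := hJ7 i.1 i.2 i'.2 h1 h2'
      exact Prod.ext hfst this
    have hlen : ∀ e ∈ l.map Prod.fst, M.len e ≤ 4 * α := by
      intro e he
      obtain ⟨i, hi, rfl⟩ := List.mem_map.mp he
      exact hJ6 i.1 i.2 (hfull' i hi).1 (hfull' i hi).2
    set l' : List {e : M.E // M.len e ≤ 4 * α} :=
      (l.map Prod.fst).pmap (fun e he => ⟨e, he⟩) hlen with hl'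
    have hl'nd : l'.Nodup := by
      apply List.Nodup.pmap ?_ hmapnd
      intro e he e' he' hme
      exact congrArg Subtype.val hme
    have hcard : l'.length ≤ Fintype.card {e : M.E // M.len e ≤ 4 * α} :=
      hl'nd.length_le_card
    have hlength : l'.length = l.length := by
      rw [hl', List.length_pmap, List.length_map]
    have hNE : M.NE (4 * α) = Fintype.card {e : M.E // M.len e ≤ 4 * α} := by
      rw [MetricGraphStruct.NE, Nat.card_eq_fintype_card]
    rw [← hlength, hNE]
    exact_mod_cast hcard
end

section
/- Let (X,d_X) be a compact connected geodesic space, r ∈ X, d = d_X(r,·), and let (G,d_G) be the metric Reeb graph of d, assumed to be a finite metric graph, with quotient map π : X → G. Then the map π is 1-Lipschitz: for all x, y ∈ X, d_G(π(x), π(y)) ≤ d_X(x,y). -/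
open Set Metric

/-- A geodesic metric space: any two points are joined by an isometrically embedded
segment. -/
def IsGeodesicSpace (X : Type*) [MetricSpace X] : Prop :=
  ∀ x y : X, ∃ γ : ℝ → X, γ 0 = x ∧ γ (dist x y) = y ∧
    ∀ s ∈ Set.Icc 0 (dist x y), ∀ t ∈ Set.Icc 0 (dist x y), dist (γ s) (γ t) = |s - t|

/-- The Reeb relation of the distance function `d = d_X(r, ·)`: two points are related if
they have the same distance to `r` and lie in the same path-connected component of the
corresponding level set of `d`. -/
def reebRel {X : Type*} [MetricSpace X] (r : X) (x y : X) : Prop :=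
  dist r x = dist r y ∧ JoinedIn {z | dist r z = dist r x} x y

/-- `G` is the metric Reeb graph of the distance function `d = d_X(r, ·)` on `X`:
`π : X → G` is the (continuous, surjective) quotient map of the Reeb relation, `d`
factors as `d_* ∘ π`, and `G` carries a finite metric graph structure whose edges are
parametrized so that `d_*` increases at unit speed along each edge (hence each edge has
length the variation of `d_*` along it), the metric on `G` being the associated
shortest-path metric. -/
structure ReebGraphOf (X : Type*) [MetricSpace X] (r : X)
    (G : Type*) [MetricSpace G] where
  /-- the finite metric graph structure on `G` -/
  graph : MetricGraphStruct G
  /-- the quotient map -/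
  π : X → G
  continuous_π : Continuous π
  surj : Function.Surjective π
  /-- `π` identifies exactly the points equivalent under the Reeb relation -/
  eq_iff : ∀ x y : X, π x = π y ↔ reebRel r x y
  /-- the function induced by `d` on the quotient -/
  dStar : G → ℝ
  dStar_π : ∀ x : X, dStar (π x) = dist r x
  /-- `d_*` increases at unit speed along each (oriented) edge -/
  dStar_param : ∀ e : graph.E, ∀ t ∈ Set.Icc 0 (graph.len e),
    dStar (graph.param e t) = dStar (graph.param e 0) + t

namespace ReebGraphOf

variable {X : Type*} [MetricSpace X] {r : X} {G : Type*} [MetricSpace G]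

/-- A merging vertex: a point of `G` which is the terminal endpoint of at least two
distinct edges (edges being oriented by increasing `d_*`). -/
def IsMergingVertex (R : ReebGraphOf X r G) (v : G) : Prop :=
  ∃ e₁ e₂ : R.graph.E, e₁ ≠ e₂ ∧ R.graph.tgt e₁ = v ∧ R.graph.tgt e₂ = v

/-- `M`: the supremum of the diameters of the fibers of `π`. -/
noncomputable def fiberDiamSup (R : ReebGraphOf X r G) : ℝ := ⨆ p : G, Metric.diam (R.π ⁻¹' {p})

end ReebGraphOf


open Set Metric

namespace MetricGraphStruct

variable {G : Type*} [MetricSpace G] (M : MetricGraphStruct G)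

/-- If a point has two distinct edge representations, then the parameter in each is an
endpoint. -/
lemma endpoint_of_coincide {e e' : M.E} {u s : ℝ} (hu : u ∈ Set.Icc 0 (M.len e))
    (hs : s ∈ Set.Icc 0 (M.len e')) (hne : ¬(e = e' ∧ u = s))
    (heq : M.param e u = M.param e' s) : u = 0 ∨ u = M.len e := by
  by_contra hcon
  push_neg at hcon
  have hu' : u ∈ Set.Ioo 0 (M.len e) :=
    ⟨lt_of_le_of_ne hu.1 (Ne.symm hcon.1), lt_of_le_of_ne hu.2 hcon.2⟩
  by_cases hee : e = e'
  · subst hee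
    have hus : u ≠ s := fun h => hne ⟨rfl, h⟩
    rcases eq_or_ne s 0 with h0 | h0
    · subst h0; exact (M.endpoint_not_interior e e u hu').1 heq.symm
    · rcases eq_or_ne s (M.len e) with hl | hl
      · subst hl; exact (M.endpoint_not_interior e e u hu').2 heq.symm
      · exact hus (M.injOn e hu' ⟨lt_of_le_of_ne hs.1 (Ne.symm h0), lt_of_le_of_ne hs.2 hl⟩ heq)
  · rcases eq_or_ne s 0 with h0 | h0
    · subst h0; exact (M.endpoint_not_interior e' e u hu').1 heq.symm
    · rcases eq_or_ne s (M.len e') with hl | hl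
      · subst hl; exact (M.endpoint_not_interior e' e u hu').2 heq.symm
      · exact M.disjoint_interiors e e' hee u hu' s
          ⟨lt_of_le_of_ne hs.1 (Ne.symm h0), lt_of_le_of_ne hs.2 hl⟩ heq

/-- Every point of a finite metric graph has a neighborhood contained in the union of the
closed edges through it. -/
lemma exists_ball_onEdge (p : G) :
    ∃ ε > 0, ∀ q : G, dist p q < ε →
      ∃ e, ∃ w ∈ Set.Icc 0 (M.len e), ∃ u ∈ Set.Icc 0 (M.len e),
        M.param e w = p ∧ M.param e u = q := by
  haveI := M.fintypeE
  obtain ⟨e₀, u₀, hu₀, hpe₀⟩ := M.cover p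
  haveI : Nonempty M.E := ⟨e₀⟩
  set ρ : ℝ := Finset.univ.inf' Finset.univ_nonempty M.len with hρ
  have hρpos : 0 < ρ := by
    rw [hρ, Finset.lt_inf'_iff]
    exact fun e _ => M.len_pos e
  have hρle : ∀ e : M.E, ρ ≤ M.len e := fun e => Finset.inf'_le _ (Finset.mem_univ e)
  -- choose ε with the key separation property
  obtain ⟨ε, hεpos, hkey⟩ : ∃ ε > 0, ∀ e : M.E, ∀ w ∈ Set.Icc 0 (M.len e), M.param e w = p →
      ∀ u : ℝ, (u = 0 ∨ u = M.len e) → u ≠ w → ε ≤ |u - w| := by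
    by_cases hint : ∃ e₁ : M.E, ∃ w₁ ∈ Set.Ioo 0 (M.len e₁), M.param e₁ w₁ = p
    · obtain ⟨e₁, w₁, hw₁, hp₁⟩ := hint
      refine ⟨min w₁ (M.len e₁ - w₁), lt_min hw₁.1 (sub_pos.mpr hw₁.2), ?_⟩
      intro e w hw hpw u hu hne
      -- the representation of p is unique
      have hEq : e₁ = e ∧ w₁ = w := by
        by_contra hne'
        have := M.endpoint_of_coincide (Set.Ioo_subset_Icc_self hw₁) hw hne'
          (hp₁.trans hpw.symm)
        rcases this with h | h
        · exact absurd h (ne_of_gt hw₁.1)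
        · exact absurd h (ne_of_lt hw₁.2)
      obtain ⟨rfl, rfl⟩ := hEq
      rcases hu with rfl | rfl
      · rw [abs_sub_comm, abs_of_nonneg (by linarith [hw₁.1] : (0:ℝ) ≤ w₁ - 0)]
        simp only [sub_zero]
        exact le_trans (min_le_left _ _) (le_refl _)
      · rw [abs_of_nonneg (by linarith [hw₁.2] : (0:ℝ) ≤ M.len e₁ - w₁)]
        exact min_le_right _ _
    · refine ⟨ρ, hρpos, ?_⟩
      intro e w hw hpw u hu hne
      have hw' : w = 0 ∨ w = M.len e := by
        by_contra hcon
        push_neg at hcon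
        exact hint ⟨e, w, ⟨lt_of_le_of_ne hw.1 (Ne.symm hcon.1), lt_of_le_of_ne hw.2 hcon.2⟩, hpw⟩
      have hlen := M.len_pos e
      rcases hu with rfl | rfl <;> rcases hw' with rfl | rfl
      · exact absurd rfl hne
      · rw [zero_sub, abs_neg, abs_of_nonneg hlen.le]; exact hρle e
      · rw [sub_zero, abs_of_nonneg hlen.le]; exact hρle e
      · exact absurd rfl hne
  -- the truncated edge-distance to p
  set C : G → Set ℝ := fun q => insert ε {v | ∃ e : M.E, ∃ w ∈ Set.Icc 0 (M.len e),
    ∃ u ∈ Set.Icc 0 (M.len e), M.param e w = p ∧ M.param e u = q ∧ v = |u - w|} with hC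
  have hCne : ∀ q, (C q).Nonempty := fun q => ⟨ε, Set.mem_insert _ _⟩
  have hCbdd : ∀ q, BddBelow (C q) := by
    intro q
    refine ⟨0, fun v hv => ?_⟩
    rcases hv with rfl | ⟨e, w, _, u, _, _, _, rfl⟩
    · exact hεpos.le
    · exact abs_nonneg _
  set g : G → ℝ := fun q => sInf (C q) with hg
  have hgle : ∀ q, g q ≤ ε := fun q => csInf_le (hCbdd q) (Set.mem_insert _ _)
  have hgp : g p = 0 := by
    refine le_antisymm ?_ (le_csInf (hCne p) fun v hv => ?_)
    · have h0 : (0:ℝ) ∈ C p := Set.mem_insert_iff.mpr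
        (Or.inr ⟨e₀, u₀, hu₀, u₀, hu₀, hpe₀, hpe₀, by simp⟩)
      exact csInf_le (hCbdd p) h0
    · rcases hv with rfl | ⟨e, w, _, u, _, _, _, rfl⟩
      · exact hεpos.le
      · exact abs_nonneg _
  -- one-sided Lipschitz property of g along edges
  have hadm : ∀ e : M.E, ∀ s ∈ Set.Icc 0 (M.len e), ∀ t ∈ Set.Icc 0 (M.len e),
      g (M.param e t) ≤ g (M.param e s) + |s - t| := by
    intro e s hs t ht
    rw [hg, ← sub_le_iff_le_add]
    refine le_csInf (hCne _) ?_
    intro a ha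
    rw [sub_le_iff_le_add]
    rcases ha with rfl | ⟨e₁, w, hwI, u, huI, hpw, hus, rfl⟩
    · exact le_trans (csInf_le (hCbdd _) (Set.mem_insert _ _)) (le_add_of_nonneg_right (abs_nonneg _))
    · by_cases hsame : e₁ = e ∧ u = s
      · obtain ⟨rfl, rfl⟩ := hsame
        have hmem : |t - w| ∈ C (M.param e₁ t) :=
          Set.mem_insert_iff.mpr (Or.inr ⟨e₁, w, hwI, t, ht, hpw, rfl, rfl⟩)
        refine le_trans (csInf_le (hCbdd _) hmem) ?_
        calc |t - w| = |(u - w) + (t - u)| := by ring_nf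
          _ ≤ |u - w| + |t - u| := abs_add_le _ _
          _ = |u - w| + |u - t| := by rw [abs_sub_comm t u]
      · have hcase := M.endpoint_of_coincide huI hs hsame hus
        by_cases huw : u = w
        · subst huw
          have hps : M.param e s = p := by rw [← hus, hpw]
          have hmem : |t - s| ∈ C (M.param e t) :=
            Set.mem_insert_iff.mpr (Or.inr ⟨e, s, hs, t, ht, hps, rfl, rfl⟩)
          refine le_trans (csInf_le (hCbdd _) hmem) ?_
          rw [abs_sub_comm t s]
          exact le_add_of_nonneg_left (abs_nonneg _)
        · have hεle : ε ≤ |u - w| := hkey e₁ w hwI hpw u hcase huw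
          exact le_trans (csInf_le (hCbdd _) (Set.mem_insert _ _))
            (le_add_of_nonneg_right (abs_nonneg _) |>.trans (add_le_add_left hεle _))
  -- apply maximality of the metric
  have hmax := M.dist_maximal (fun q q' => |g q - g q'|)
    (fun q => by simp)
    (fun q q' => abs_sub_comm _ _)
    (fun q q' q'' => abs_sub_le _ _ _)
    (fun e s hs t ht => by
      rw [abs_sub_le_iff]
      constructor
      · have h1 := hadm e t ht s hs
        rw [abs_sub_comm t s] at h1
        linarith
      · have h2 := hadm e s hs t ht
        linarith)
  refine ⟨ε, hεpos, ?_⟩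
  intro q hq
  have hgq : g q ≤ dist p q := by
    have := hmax p q
    rw [hgp] at this
    simp only [zero_sub, abs_neg] at this
    have hnn : 0 ≤ g q := le_csInf (hCne q) fun v hv => by
      rcases hv with rfl | ⟨e, w, _, u, _, _, _, rfl⟩
      · exact hεpos.le
      · exact abs_nonneg _
    rwa [abs_of_nonneg hnn] at this
  have hlt : sInf (C q) < ε := lt_of_le_of_lt hgq hq
  obtain ⟨v, hv, hvε⟩ := exists_lt_of_csInf_lt (hCne q) hlt
  rcases hv with rfl | ⟨e, w, hwI, u, huI, hpw, hpu, rfl⟩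
  · exact absurd hvε (lt_irrefl _)
  · exact ⟨e, w, hwI, u, huI, hpw, hpu⟩

end MetricGraphStruct

/-- The quotient map `π : X → G` onto the metric Reeb graph of `d = d_X(r,·)` is
1-Lipschitz. -/
theorem reeb_quotient_map_one_lipschitz {X : Type*} [MetricSpace X] [CompactSpace X]
    [ConnectedSpace X] (hX : IsGeodesicSpace X) (r : X)
    {G : Type*} [MetricSpace G] (R : ReebGraphOf X r G) :
    ∀ x y : X, dist (R.π x) (R.π y) ≤ dist x y := by
  intro x y
  obtain ⟨γ, hγ0, hγL, hγiso⟩ := hX x y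
  set L := dist x y with hL
  have hL0 : 0 ≤ L := dist_nonneg
  set f : ℝ → G := fun t => R.π (γ t) with hf
  set S : Set ℝ := {t | t ∈ Set.Icc 0 L ∧ dist (f 0) (f t) ≤ t} with hS
  have h0S : (0:ℝ) ∈ S := ⟨⟨le_refl 0, hL0⟩, by simp⟩
  have hSne : S.Nonempty := ⟨0, h0S⟩
  have hSbdd : BddAbove S := ⟨L, fun t ht => ht.1.2⟩
  set c := sSup S with hc
  have hc0 : 0 ≤ c := le_csSup hSbdd h0S
  have hcL : c ≤ L := csSup_le hSne (fun t ht => ht.1.2)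
  have hcIcc : c ∈ Set.Icc 0 L := ⟨hc0, hcL⟩
  -- continuity of π at γ c, metric form
  have hπcont : ∀ ε > 0, ∃ δ > 0, ∀ a : X, dist a (γ c) < δ → dist (R.π a) (f c) < ε := by
    have hcont := Metric.continuous_iff.mp R.continuous_π (γ c)
    exact fun ε hε => hcont ε hε
  -- the sup belongs to S
  have hcS : dist (f 0) (f c) ≤ c := by
    by_contra hcon
    push_neg at hcon
    set η := dist (f 0) (f c) - c with hη
    have hηpos : 0 < η := by simp only [hη]; linarith
    obtain ⟨δ, hδpos, hδ⟩ := hπcont (η/2) (by linarith)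
    have hlt : c - min δ (η/2) < c := by
      have : 0 < min δ (η/2) := lt_min hδpos (by linarith)
      linarith
    obtain ⟨t, htS, htgt⟩ := exists_lt_of_lt_csSup hSne hlt
    have htc : t ≤ c := le_csSup hSbdd htS
    have hdγ : dist (γ t) (γ c) = |t - c| := hγiso t htS.1 c hcIcc
    have h1 : dist (f t) (f c) < η/2 := by
      apply hδ
      rw [hdγ, abs_of_nonpos (by linarith : t - c ≤ 0)]
      have := lt_of_lt_of_le htgt htc  -- not needed
      calc -(t - c) = c - t := by ring
        _ < min δ (η/2) := by linarith
        _ ≤ δ := min_le_left _ _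
    have : dist (f 0) (f c) ≤ dist (f 0) (f t) + dist (f t) (f c) := dist_triangle _ _ _
    have hb : dist (f 0) (f t) ≤ t := htS.2
    simp only [hη] at hηpos
    linarith
  -- the sup is L
  have hcL' : c = L := by
    by_contra hne
    have hclt : c < L := lt_of_le_of_ne hcL hne
    obtain ⟨ε, hεpos, hball⟩ := R.graph.exists_ball_onEdge (f c)
    obtain ⟨δ, hδpos, hδ⟩ := hπcont ε hεpos
    set t' := min L (c + δ/2) with ht'
    have hct' : c < t' := lt_min hclt (by linarith)
    have ht'L : t' ≤ L := min_le_left _ _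
    have ht'Icc : t' ∈ Set.Icc 0 L := ⟨le_trans hc0 hct'.le, ht'L⟩
    have hdγ : dist (γ t') (γ c) = |t' - c| := hγiso t' ht'Icc c hcIcc
    have h1 : dist (f t') (f c) < ε := by
      apply hδ
      rw [hdγ, abs_of_nonneg (by linarith : (0:ℝ) ≤ t' - c)]
      have : t' ≤ c + δ/2 := min_le_right _ _
      linarith
    obtain ⟨e, w, hw, u, hu, hpw, hpu⟩ := hball (f t') (by rw [dist_comm]; exact h1)
    have hlip := (R.graph.param_lipschitz e).dist_le_mul w hw u hu
    have hdd : R.dStar (f t') - R.dStar (f c) = u - w := by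
      rw [← hpw, ← hpu, R.dStar_param e u hu, R.dStar_param e w hw]; ring
    have hd1 : R.dStar (f c) = dist r (γ c) := R.dStar_π (γ c)
    have hd2 : R.dStar (f t') = dist r (γ t') := R.dStar_π (γ t')
    have h2 : |u - w| ≤ t' - c := by
      rw [← hdd, hd2, hd1]
      have habs := abs_dist_sub_le (γ t') (γ c) r
      rw [dist_comm (γ t') r, dist_comm (γ c) r] at habs
      calc |dist r (γ t') - dist r (γ c)| ≤ dist (γ t') (γ c) := habs
        _ = |t' - c| := hdγ
        _ = t' - c := abs_of_nonneg (by linarith)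
    have h3 : dist (f c) (f t') ≤ t' - c := by
      calc dist (f c) (f t') = dist (R.graph.param e w) (R.graph.param e u) := by
            rw [hpw, hpu]
        _ ≤ 1 * dist w u := hlip
        _ = |w - u| := by rw [one_mul, Real.dist_eq]
        _ = |u - w| := abs_sub_comm _ _
        _ ≤ t' - c := h2
    have ht'S : t' ∈ S := by
      refine ⟨ht'Icc, ?_⟩
      calc dist (f 0) (f t') ≤ dist (f 0) (f c) + dist (f c) (f t') := dist_triangle _ _ _
        _ ≤ c + (t' - c) := add_le_add hcS h3
        _ = t' := by ring
    exact absurd (le_csSup hSbdd ht'S) (not_le.mpr hct')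
  have hfin : dist (f 0) (f L) ≤ L := hcL' ▸ hcS
  have hf0 : f 0 = R.π x := by rw [hf]; simp [hγ0]
  have hfL : f L = R.π y := by rw [hf]; simp only; rw [hγL]
  rw [hf0, hfL] at hfin
  exact hfin
end

section
/- Let (X,d_X) be a compact connected geodesic space with Reeb graph (G,d_G) of the distance function d = d_X(r,·) (assumed a finite metric graph), and quotient map π : X → G. If δ is a continuous path in G joining p to p' along which d_* is strictly increasing, then δ is a shortest path in G and d_G(p,p') = d_*(p') − d_*(p). In particular, d_*(p) = d_G(π(r), p) for every p ∈ G. -/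
open Set Metric

section AuxLemmas

open Filter Topology

namespace ReebGraphOf

variable {X : Type*} [MetricSpace X] {r : X} {G : Type*} [MetricSpace G]

lemma dStar_lip (R : ReebGraphOf X r G) (p q : G) :
    |R.dStar p - R.dStar q| ≤ dist p q := by
  apply R.graph.dist_maximal (fun p q => |R.dStar p - R.dStar q|)
  · intro p; simp
  · intro p q; exact abs_sub_comm _ _
  · intro p q s; exact abs_sub_le _ _ _
  · intro e s hs t ht
    rw [R.dStar_param e s hs, R.dStar_param e t ht]
    simp

lemma dStar_cont (R : ReebGraphOf X r G) : Continuous R.dStar := by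
  apply (LipschitzWith.of_dist_le_mul (K := 1) (f := R.dStar) ?_).continuous
  intro p q
  rw [Real.dist_eq, NNReal.coe_one, one_mul]
  exact R.dStar_lip p q

lemma edge_isom (R : ReebGraphOf X r G) (e : R.graph.E) {s t : ℝ}
    (hs : s ∈ Set.Icc 0 (R.graph.len e)) (ht : t ∈ Set.Icc 0 (R.graph.len e)) :
    dist (R.graph.param e s) (R.graph.param e t) = |s - t| := by
  refine le_antisymm ?_ ?_
  · have := (R.graph.param_lipschitz e).dist_le_mul s hs t ht
    rwa [NNReal.coe_one, one_mul, Real.dist_eq] at this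
  · have h := R.dStar_lip (R.graph.param e s) (R.graph.param e t)
    rwa [R.dStar_param e s hs, R.dStar_param e t ht, add_sub_add_left_eq_sub] at h

/-- Local structure: nearby points with larger `d_*` value lie further up the
same edge, at distance exactly the difference of `d_*` values. -/
lemma local_up (R : ReebGraphOf X r G) (q : G) :
    ∃ ε > 0, ∀ q' : G, dist q q' < ε → R.dStar q < R.dStar q' →
      dist q q' = R.dStar q' - R.dStar q := by
  haveI : Fintype R.graph.E := R.graph.fintypeE
  -- choose, for each edge not containing q, a positive lower bound for dist to that edge
  have hchoice : ∀ e : R.graph.E, ∃ ε > (0 : ℝ),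
      (¬ (∃ s ∈ Set.Icc 0 (R.graph.len e), R.graph.param e s = q)) →
      ∀ t ∈ Set.Icc 0 (R.graph.len e), ε ≤ dist q (R.graph.param e t) := by
    intro e
    by_cases h : ∃ s ∈ Set.Icc 0 (R.graph.len e), R.graph.param e s = q
    · exact ⟨1, one_pos, fun h' => absurd h h'⟩
    · -- q not on edge e; the image of e is compact, so dist to it is bounded below
      have hcomp : IsCompact (R.graph.param e '' Set.Icc 0 (R.graph.len e)) :=
        isCompact_Icc.image_of_continuousOn (R.graph.param_lipschitz e).continuousOn
      have hne : (R.graph.param e '' Set.Icc 0 (R.graph.len e)).Nonempty :=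
        ⟨R.graph.param e 0, Set.mem_image_of_mem _ ⟨le_refl 0, (R.graph.len_pos e).le⟩⟩
      obtain ⟨y, hy, hymin⟩ := hcomp.exists_infDist_eq_dist hne q
      have hqy : q ≠ y := by
        rintro rfl
        obtain ⟨s, hs, hse⟩ := hy
        exact h ⟨s, hs, hse⟩
      refine ⟨dist q y, dist_pos.mpr hqy, fun _ t ht => ?_⟩
      rw [← hymin]
      exact Metric.infDist_le_dist_of_mem (Set.mem_image_of_mem _ ht)
  choose ε hεpos hεspec using hchoice
  have hEne : Nonempty R.graph.E := by
    obtain ⟨e, _, _, _⟩ := R.graph.cover q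
    exact ⟨e⟩
  refine ⟨Finset.univ.inf' (Finset.univ_nonempty) ε, ?_, ?_⟩
  · exact (Finset.lt_inf'_iff _).mpr fun e _ => hεpos e
  · intro q' hd hlt
    obtain ⟨e, t, ht, hte⟩ := R.graph.cover q'
    -- q must lie on edge e
    have hinf : Finset.univ.inf' (Finset.univ_nonempty) ε ≤ ε e :=
      Finset.inf'_le _ (Finset.mem_univ e)
    have hq_on : ∃ s ∈ Set.Icc 0 (R.graph.len e), R.graph.param e s = q := by
      by_contra h
      have := hεspec e h t ht
      rw [hte] at this
      linarith
    obtain ⟨s, hs, hse⟩ := hq_on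
    have hd' : R.dStar q' - R.dStar q = t - s := by
      rw [← hte, ← hse, R.dStar_param e t ht, R.dStar_param e s hs]
      ring
    have hst : s < t := by
      rw [← hse, ← hte, R.dStar_param e s hs, R.dStar_param e t ht] at hlt
      linarith
    rw [← hse, ← hte, R.edge_isom e hs ht, R.dStar_param e t ht, R.dStar_param e s hs,
      abs_sub_comm, abs_of_pos (sub_pos.mpr hst)]
    ring

/-- Key lemma: a continuous path along which `d_*` strictly increases realizes the
distance between its endpoints, which equals the increment of `d_*`. -/
lemma key (R : ReebGraphOf X r G) {a b : ℝ} (hab : a ≤ b) {δ : ℝ → G}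
    (hδc : ContinuousOn δ (Set.Icc a b))
    (hmono : StrictMonoOn (R.dStar ∘ δ) (Set.Icc a b)) :
    dist (δ a) (δ b) = R.dStar (δ b) - R.dStar (δ a) := by
  set S : Set ℝ := {t | t ∈ Set.Icc a b ∧
    dist (δ a) (δ t) ≤ R.dStar (δ t) - R.dStar (δ a)} with hSdef
  have haS : a ∈ S := ⟨⟨le_refl a, hab⟩, by simp⟩
  have hbdd : BddAbove S := ⟨b, fun t ht => ht.1.2⟩
  have hSclosed : IsClosed S := by
    have hF : ContinuousOn (fun t => dist (δ a) (δ t) -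
        (R.dStar (δ t) - R.dStar (δ a))) (Set.Icc a b) := by
      apply ContinuousOn.sub
      · exact (continuous_const.dist continuous_id).comp_continuousOn hδc
      · exact ContinuousOn.sub (R.dStar_cont.comp_continuousOn hδc) continuousOn_const
    have : S = Set.Icc a b ∩ (fun t => dist (δ a) (δ t) -
        (R.dStar (δ t) - R.dStar (δ a))) ⁻¹' Set.Iic 0 := by
      ext t
      simp only [hSdef, Set.mem_setOf_eq, Set.mem_inter_iff, Set.mem_preimage, Set.mem_Iic]
      constructor
      · rintro ⟨h1, h2⟩; exact ⟨h1, by linarith⟩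
      · rintro ⟨h1, h2⟩; exact ⟨h1, by linarith⟩
    rw [this]
    exact hF.preimage_isClosed_of_isClosed isClosed_Icc isClosed_Iic
  have hcS : sSup S ∈ S := hSclosed.csSup_mem ⟨a, haS⟩ hbdd
  set c := sSup S with hc
  have hcb : c ≤ b := hcS.1.2
  have hcbeq : c = b := by
    by_contra hne
    have hclt : c < b := lt_of_le_of_ne hcb hne
    obtain ⟨ε, hεpos, hloc⟩ := R.local_up (δ c)
    have hcw : ContinuousWithinAt δ (Set.Icc a b) c := hδc c hcS.1
    have hev : ∀ᶠ t in 𝓝[Set.Icc a b] c, dist (δ t) (δ c) < ε :=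
      Metric.tendsto_nhds.mp hcw ε hεpos
    have hle : 𝓝[Set.Ioc c b] c ≤ 𝓝[Set.Icc a b] c :=
      nhdsWithin_mono c (fun t ht => ⟨hcS.1.1.trans ht.1.le, ht.2⟩)
    have hev' : ∀ᶠ t in 𝓝[Set.Ioc c b] c, dist (δ t) (δ c) < ε := hle hev
    have hne' : (𝓝[Set.Ioc c b] c).NeBot := by
      rw [← mem_closure_iff_nhdsWithin_neBot, closure_Ioc hclt.ne]
      exact ⟨le_refl c, hcb⟩
    obtain ⟨t, htd, htm⟩ := (hev'.and (eventually_mem_nhdsWithin)).exists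
    have htIcc : t ∈ Set.Icc a b := ⟨hcS.1.1.trans htm.1.le, htm.2⟩
    have hlt : R.dStar (δ c) < R.dStar (δ t) := hmono hcS.1 htIcc htm.1
    have heq : dist (δ c) (δ t) = R.dStar (δ t) - R.dStar (δ c) :=
      hloc (δ t) (by rwa [dist_comm]) hlt
    have htS : t ∈ S := by
      refine ⟨htIcc, ?_⟩
      calc dist (δ a) (δ t) ≤ dist (δ a) (δ c) + dist (δ c) (δ t) := dist_triangle _ _ _
        _ ≤ (R.dStar (δ c) - R.dStar (δ a)) + (R.dStar (δ t) - R.dStar (δ c)) := by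
            rw [heq]; exact add_le_add hcS.2 le_rfl
        _ = R.dStar (δ t) - R.dStar (δ a) := by ring
    exact absurd (le_csSup hbdd htS) (not_le.mpr htm.1)
  have hub : dist (δ a) (δ b) ≤ R.dStar (δ b) - R.dStar (δ a) := hcbeq ▸ hcS.2
  have hlb := R.dStar_lip (δ b) (δ a)
  have := le_abs_self (R.dStar (δ b) - R.dStar (δ a))
  rw [dist_comm (δ b) (δ a)] at hlb
  linarith

end ReebGraphOf

end AuxLemmas

/-- In the metric Reeb graph `G` of `d = d_X(r,·)`, a continuous path along which `d_*`
is strictly increasing is a shortest path: its length (total variation) equals the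
distance between its endpoints, which is `d_*(p') - d_*(p)`. In particular
`d_*(p) = d_G(π r, p)` for every `p ∈ G`. -/
theorem dStar_increasing_path_is_shortest {X : Type*} [MetricSpace X] [CompactSpace X]
    [ConnectedSpace X] (hX : IsGeodesicSpace X) (r : X)
    {G : Type*} [MetricSpace G] (R : ReebGraphOf X r G)
    (a b : ℝ) (hab : a ≤ b) (δ : ℝ → G) (hδc : ContinuousOn δ (Set.Icc a b))
    (hmono : StrictMonoOn (R.dStar ∘ δ) (Set.Icc a b))
    (p p' : G) (hp : δ a = p) (hp' : δ b = p') :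
    (dist p p' = R.dStar p' - R.dStar p ∧
      eVariationOn δ (Set.Icc a b) = ENNReal.ofReal (dist p p')) ∧
    ∀ q : G, R.dStar q = dist (R.π r) q := by
  subst hp hp'
  have hkey := R.key hab hδc hmono
  have hmem : ∀ t, t ∈ Set.Icc a b → t ∈ Set.Icc a b := fun t ht => ht
  have hsub : ∀ {s t : ℝ}, s ∈ Set.Icc a b → t ∈ Set.Icc a b → s ≤ t →
      dist (δ s) (δ t) = R.dStar (δ t) - R.dStar (δ s) := by
    intro s t hs ht hst
    have hss : Set.Icc s t ⊆ Set.Icc a b := Set.Icc_subset_Icc hs.1 ht.2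
    exact R.key hst (hδc.mono hss) (hmono.mono hss)
  constructor
  · refine ⟨hkey, le_antisymm ?_ ?_⟩
    · -- upper bound on the variation
      apply iSup_le
      rintro ⟨n, u, hu, hus⟩
      have hterm : ∀ i, edist (δ (u (i + 1))) (δ (u i)) =
          ENNReal.ofReal ((R.dStar ∘ δ ∘ u) (i + 1) - (R.dStar ∘ δ ∘ u) i) := by
        intro i
        rw [edist_dist, dist_comm,
          hsub (hus i) (hus (i + 1)) (hu (Nat.le_succ i))]
        rfl
      calc ∑ i ∈ Finset.range n, edist (δ (u (i + 1))) (δ (u i))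
          = ENNReal.ofReal (∑ i ∈ Finset.range n,
              ((R.dStar ∘ δ ∘ u) (i + 1) - (R.dStar ∘ δ ∘ u) i)) := by
            rw [ENNReal.ofReal_sum_of_nonneg]
            · exact Finset.sum_congr rfl fun i _ => hterm i
            · intro i _
              have := (hmono.monotoneOn) (hus i) (hus (i + 1)) (hu (Nat.le_succ i))
              simpa using this
        _ = ENNReal.ofReal ((R.dStar ∘ δ ∘ u) n - (R.dStar ∘ δ ∘ u) 0) := by
            rw [Finset.sum_range_sub]
        _ ≤ ENNReal.ofReal (dist (δ a) (δ b)) := by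
            apply ENNReal.ofReal_le_ofReal
            rw [hkey]
            have h1 := (hmono.monotoneOn) (hus n) ⟨hab, le_refl b⟩ (hus n).2
            have h2 := (hmono.monotoneOn) ⟨le_refl a, hab⟩ (hus 0) (hus 0).1
            simp only [Function.comp_apply] at h1 h2 ⊢
            linarith
    · -- lower bound on the variation
      have := eVariationOn.edist_le δ (s := Set.Icc a b) (x := a) (y := b)
        ⟨le_refl a, hab⟩ ⟨hab, le_refl b⟩
      rwa [edist_dist] at this
  · -- d_* p = d_G(π r, p) via geodesics
    intro q
    obtain ⟨x, hx⟩ := R.surj q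
    obtain ⟨γ, hγ0, hγD, hγiso⟩ := hX r x
    set D := dist r x with hD
    have hD0 : (0 : ℝ) ≤ D := dist_nonneg
    have h0m : (0 : ℝ) ∈ Set.Icc 0 D := ⟨le_refl 0, hD0⟩
    have hid : ∀ t ∈ Set.Icc 0 D, R.dStar (R.π (γ t)) = t := by
      intro t ht
      rw [R.dStar_π, ← hγ0, hγiso 0 h0m t ht]
      rw [abs_sub_comm, abs_of_nonneg (by simpa using ht.1)]
      simp
    have hγc : ContinuousOn γ (Set.Icc 0 D) := by
      apply (LipschitzOnWith.of_dist_le_mul (K := 1) ?_).continuousOn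
      intro s hs t ht
      rw [hγiso s hs t ht, NNReal.coe_one, one_mul, Real.dist_eq]
    have hδ'c : ContinuousOn (R.π ∘ γ) (Set.Icc 0 D) :=
      R.continuous_π.comp_continuousOn hγc
    have hmono' : StrictMonoOn (R.dStar ∘ (R.π ∘ γ)) (Set.Icc 0 D) := by
      intro s hs t ht hst
      simpa only [Function.comp_apply, hid s hs, hid t ht] using hst
    have hfin := R.key hD0 hδ'c hmono'
    simp only [Function.comp_apply, hγ0, hγD, hx] at hfin
    have h1 : R.dStar (R.π r) = 0 := by rw [R.dStar_π]; simp
    have h2 : R.dStar q = D := by rw [← hx, R.dStar_π]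
    linarith
end

section
/- Let (X,d_X) be a compact connected geodesic space with finite metric Reeb graph (G,d_G) of the distance function d = d_X(r,·), and quotient map π : X → G. Then for all x, y ∈ X, d_X(x,y) ≤ d_G(π(x),π(y)) + 2(β_1(G)+1)·M, where β_1(G) is the first Betti number of G and M = sup_{p∈G} diam(π^{-1}(p)) is the supremum of diameters of fibers of π. -/
open Set Metric

namespace RProof
open Set Metric Filter List

attribute [local instance] MetricGraphStruct.fintypeE

variable {X : Type*} [MetricSpace X] {r : X} {G : Type*} [MetricSpace G]

abbrev Lnk (R : ReebGraphOf X r G) : Type _ := R.graph.E × ℝ × ℝ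

variable (R : ReebGraphOf X r G)

def lSrc (l : Lnk R) : G := R.graph.param l.1 l.2.1
def lTgt (l : Lnk R) : G := R.graph.param l.1 l.2.2
def lCost (l : Lnk R) : ℝ := |l.2.1 - l.2.2|
def LinkOK (l : Lnk R) : Prop :=
  l.2.1 ∈ Set.Icc 0 (R.graph.len l.1) ∧ l.2.2 ∈ Set.Icc 0 (R.graph.len l.1)

def lFlip (l : Lnk R) : Lnk R := ⟨l.1, l.2.2, l.2.1⟩

inductive Chain : G → G → List (Lnk R) → Prop
  | nil (p : G) : Chain p p []
  | cons {l : Lnk R} {q : G} {L : List (Lnk R)} (hok : LinkOK R l)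
      (h : Chain (lTgt R l) q L) : Chain (lSrc R l) q (l :: L)

def cost (L : List (Lnk R)) : ℝ := (L.map (lCost R)).sum

lemma lCost_nonneg (l : Lnk R) : 0 ≤ lCost R l := abs_nonneg _

lemma cost_nil : cost R ([] : List (Lnk R)) = 0 := rfl

lemma cost_cons (l : Lnk R) (L : List (Lnk R)) : cost R (l :: L) = lCost R l + cost R L := by
  simp [cost]

lemma cost_append (L₁ L₂ : List (Lnk R)) : cost R (L₁ ++ L₂) = cost R L₁ + cost R L₂ := by
  simp [cost]

lemma cost_nonneg (L : List (Lnk R)) : 0 ≤ cost R L :=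
  List.sum_nonneg (by rintro x hx; simp only [List.mem_map] at hx
                      obtain ⟨l, _, rfl⟩ := hx; exact lCost_nonneg R l)

lemma chain_append {p m q : G} {L₁ L₂ : List (Lnk R)} (h₁ : Chain R p m L₁)
    (h₂ : Chain R m q L₂) : Chain R p q (L₁ ++ L₂) := by
  induction h₁ with
  | nil => exact h₂
  | cons hok h ih => exact Chain.cons hok (ih h₂)

lemma chain_split {p q : G} {L₁ L₂ : List (Lnk R)} (h : Chain R p q (L₁ ++ L₂)) :
    ∃ m, Chain R p m L₁ ∧ Chain R m q L₂ := by
  induction L₁ generalizing p with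
  | nil => exact ⟨p, Chain.nil p, h⟩
  | cons l t ih =>
    cases h with
    | cons hok h' =>
      obtain ⟨m, hm1, hm2⟩ := ih h'
      exact ⟨m, Chain.cons hok hm1, hm2⟩

lemma chain_symm {p q : G} {L : List (Lnk R)} (h : Chain R p q L) :
    Chain R q p ((L.reverse).map (lFlip R)) := by
  induction h with
  | nil => exact Chain.nil _
  | cons hok h ih =>
    rename_i l q' L'
    have h1 : Chain R (lSrc R (lFlip R l)) (lSrc R l) [lFlip R l] := by
      have h2 : lTgt R (lFlip R l) = lSrc R l := rfl
      refine Chain.cons ⟨hok.2, hok.1⟩ ?_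
      rw [h2]; exact Chain.nil _
    simp only [List.reverse_cons, List.map_append, List.map_cons, List.map_nil]
    exact chain_append R ih h1

lemma cost_flip (l : Lnk R) : lCost R (lFlip R l) = lCost R l := abs_sub_comm _ _

lemma cost_reverse_flip (L : List (Lnk R)) :
    cost R ((L.reverse).map (lFlip R)) = cost R L := by
  induction L with
  | nil => rfl
  | cons l t ih =>
    simp only [List.reverse_cons, List.map_append, cost_append, ih, List.map_cons,
      List.map_nil, cost_cons, cost_nil, cost_flip]
    ring

lemma dS_nonneg (g : G) : 0 ≤ R.dStar g := by
  obtain ⟨x, rfl⟩ := R.surj g; rw [R.dStar_π]; exact dist_nonneg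

lemma dS_param {e : R.graph.E} {t : ℝ} (ht : t ∈ Set.Icc 0 (R.graph.len e)) :
    R.dStar (R.graph.param e t) = R.dStar (R.graph.src e) + t :=
  R.dStar_param e t ht

lemma dS_src_tgt (e : R.graph.E) :
    R.dStar (R.graph.tgt e) = R.dStar (R.graph.src e) + R.graph.len e :=
  dS_param R ⟨(R.graph.len_pos e).le, le_refl _⟩

/-! ### Interior points, the junk set, fibers -/

def cE (e : R.graph.E) : ℝ := R.dStar (R.graph.src e)

lemma cE_nonneg (e : R.graph.E) : 0 ≤ cE R e := dS_nonneg R _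

lemma interior_eq {e e' : R.graph.E} {t t' : ℝ} (ht : t ∈ Set.Ioo 0 (R.graph.len e))
    (ht' : t' ∈ Set.Icc 0 (R.graph.len e')) (h : R.graph.param e' t' = R.graph.param e t) :
    e' = e ∧ t' = t := by
  rcases eq_or_lt_of_le ht'.1 with h0 | h0
  · exact absurd (h0 ▸ h) (R.graph.endpoint_not_interior e' e t ht).1
  rcases eq_or_lt_of_le ht'.2 with h1 | h1
  · exact absurd (h1 ▸ h) (R.graph.endpoint_not_interior e' e t ht).2
  by_cases he : e' = e
  · subst he
    exact ⟨rfl, R.graph.injOn e' ⟨h0, h1⟩ ht h⟩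
  · exact absurd h (R.graph.disjoint_interiors e' e he t' ⟨h0, h1⟩ t ht)

lemma vertex_not_interior {v : G} (hv : v ∈ R.graph.vertexSet) {e : R.graph.E} {t : ℝ}
    (ht : t ∈ Set.Ioo 0 (R.graph.len e)) : v ≠ R.graph.param e t := by
  obtain ⟨e₀, h | h⟩ := hv
  · exact h ▸ (R.graph.endpoint_not_interior e₀ e t ht).1
  · exact h ▸ (R.graph.endpoint_not_interior e₀ e t ht).2

def im (e : R.graph.E) : Set G := R.graph.param e '' Set.Icc 0 (R.graph.len e)

lemma isClosed_im (e : R.graph.E) : IsClosed (im R e) :=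
  (isCompact_Icc.image_of_continuousOn (R.graph.param_lipschitz e).continuousOn).isClosed

def Kset (e : R.graph.E) : Set G :=
  (⋃ e' ∈ ({e' | e' ≠ e} : Set R.graph.E), im R e') ∪ {R.graph.src e, R.graph.tgt e}

lemma isClosed_Kset (e : R.graph.E) : IsClosed (Kset R e) := by
  refine IsClosed.union ?_ ?_
  · exact Set.Finite.isClosed_biUnion (Set.toFinite _) (fun e' _ => isClosed_im R e')
  · exact (Set.finite_singleton _ |>.insert _).isClosed

lemma interior_not_Kset {e : R.graph.E} {t : ℝ} (ht : t ∈ Set.Ioo 0 (R.graph.len e)) :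
    R.graph.param e t ∉ Kset R e := by
  intro h
  rcases h with h | h
  · simp only [Set.mem_iUnion, Set.mem_setOf_eq] at h
    obtain ⟨e', he', ⟨t', ht', heq⟩⟩ := h
    exact he' (interior_eq R ht ht' heq).1
  · rcases h with h | h
    · exact (R.graph.endpoint_not_interior e e t ht).1 h.symm
    · exact (R.graph.endpoint_not_interior e e t ht).2 (Set.mem_singleton_iff.mp h).symm

lemma not_Kset_char {e : R.graph.E} {q : G} (h : q ∉ Kset R e) :
    R.dStar q - cE R e ∈ Set.Ioo 0 (R.graph.len e) ∧
      q = R.graph.param e (R.dStar q - cE R e) := by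
  obtain ⟨e', t', ht', heq⟩ := R.graph.cover q
  have he' : e' = e := by
    by_contra hne
    exact h (Or.inl (Set.mem_biUnion hne ⟨t', ht', heq⟩))
  subst he'
  have htI : t' ∈ Set.Ioo 0 (R.graph.len e') := by
    rcases eq_or_lt_of_le ht'.1 with h0 | h0
    · exact absurd (heq ▸ h0 ▸ rfl : R.graph.src e' = q)
        (by intro hh; exact h (Or.inr (Or.inl hh.symm)))
    rcases eq_or_lt_of_le ht'.2 with h1 | h1
    · exfalso
      apply h
      right; right
      have : R.graph.tgt e' = q := by
        show R.graph.param e' (R.graph.len e') = q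
        rw [← h1]; exact heq
      exact this ▸ rfl
    exact ⟨h0, h1⟩
  have hd : R.dStar q = cE R e' + t' := by rw [← heq]; exact dS_param R ht'
  have : R.dStar q - cE R e' = t' := by linarith
  rw [this]
  exact ⟨htI, heq.symm⟩

/-! ### Fibers -/

variable [CompactSpace X]

lemma fiber_hop {a b : X} (h : R.π a = R.π b) : dist a b ≤ R.fiberDiamSup := by
  have hb : Bornology.IsBounded (R.π ⁻¹' {R.π b}) :=
    isCompact_univ.isBounded.subset (Set.subset_univ _)
  have h1 : dist a b ≤ Metric.diam (R.π ⁻¹' {R.π b}) :=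
    Metric.dist_le_diam_of_mem hb (by simp [h]) (by simp)
  refine h1.trans ?_
  refine le_ciSup_of_le ?_ (R.π b) le_rfl
  refine ⟨Metric.diam (Set.univ : Set X), ?_⟩
  rintro d ⟨p, rfl⟩
  exact Metric.diam_mono (Set.subset_univ _) isCompact_univ.isBounded

lemma Mf_nonneg : 0 ≤ R.fiberDiamSup :=
  Real.iSup_nonneg (fun _ => Metric.diam_nonneg)

/-! ### Geodesics and forced descent -/

omit [CompactSpace X] in
lemma dS_geo {γ : ℝ → X} {H u : ℝ} (hγ0 : γ 0 = r)
    (hiso : ∀ s ∈ Set.Icc (0:ℝ) H, ∀ t ∈ Set.Icc (0:ℝ) H, dist (γ s) (γ t) = |s - t|)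
    (hu : u ∈ Set.Icc 0 H) : R.dStar (R.π (γ u)) = u := by
  have h0 : (0:ℝ) ∈ Set.Icc (0:ℝ) H := ⟨le_rfl, hu.1.trans hu.2⟩
  rw [R.dStar_π, ← hγ0, hiso 0 h0 u hu, zero_sub, abs_neg, abs_of_nonneg hu.1]

omit [CompactSpace X] in
lemma geo_contOn {γ : ℝ → X} {H : ℝ}
    (hiso : ∀ s ∈ Set.Icc (0:ℝ) H, ∀ t ∈ Set.Icc (0:ℝ) H, dist (γ s) (γ t) = |s - t|) :
    ContinuousOn γ (Set.Icc 0 H) :=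
  LipschitzOnWith.continuousOn (K := 1) (LipschitzOnWith.of_dist_le_mul
    (fun x hx y hy => by rw [hiso x hx y hy, NNReal.coe_one, one_mul, Real.dist_eq]))

omit [CompactSpace X] in
lemma geo_tendsto {γ : ℝ → X} {H : ℝ} {z : X}
    (hiso : ∀ s ∈ Set.Icc (0:ℝ) H, ∀ t ∈ Set.Icc (0:ℝ) H, dist (γ s) (γ t) = |s - t|)
    (hH0 : 0 < H) (hγH : γ H = z) :
    Filter.Tendsto (fun u => R.π (γ u)) (nhdsWithin H (Set.Iio H)) (nhds (R.π z)) := by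
  have h1 : ContinuousWithinAt γ (Set.Icc 0 H) H :=
    (geo_contOn (X := X) hiso).continuousWithinAt ⟨hH0.le, le_rfl⟩
  have h2 : Filter.Tendsto γ (nhdsWithin H (Set.Icc 0 H)) (nhds z) := hγH ▸ h1
  have h3 : nhdsWithin H (Set.Iio H) ≤ nhdsWithin H (Set.Icc 0 H) :=
    nhdsWithin_le_of_mem (Filter.mem_of_superset
      (Ioo_mem_nhdsLT_of_mem ⟨hH0, le_rfl⟩) Set.Ioo_subset_Icc_self)
  exact ((R.continuous_π.tendsto z).comp (h2.mono_left h3))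

omit [CompactSpace X] in
lemma descend_core {e : R.graph.E} {t : ℝ} (ht : t ∈ Set.Ioc 0 (R.graph.len e))
    {γ : ℝ → X} (hγ0 : γ 0 = r)
    (hiso : ∀ s ∈ Set.Icc (0:ℝ) (cE R e + t), ∀ u ∈ Set.Icc (0:ℝ) (cE R e + t),
      dist (γ s) (γ u) = |s - u|)
    (hseed : ∀ᶠ u in nhdsWithin (cE R e + t) (Set.Iio (cE R e + t)),
      R.π (γ u) ∉ Kset R e) :
    ∀ s ∈ Set.Ico 0 t, R.π (γ (cE R e + s)) = R.graph.param e s := by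
  set c := cE R e with hc
  have hc0 : 0 ≤ c := cE_nonneg R e
  have hht : c < c + t := lt_add_of_pos_right c ht.1
  have hsub : Set.Ioo c (c + t) ⊆ Set.Icc 0 (c + t) := fun u hu =>
    ⟨hc0.trans hu.1.le, hu.2.le⟩
  haveI : PreconnectedSpace ↥(Set.Ioo c (c + t)) :=
    Subtype.preconnectedSpace isPreconnected_Ioo
  set f₁ : ↥(Set.Ioo c (c + t)) → G := fun u => R.π (γ ↑u) with hf₁
  have hmemIcc : ∀ u : ↥(Set.Ioo c (c + t)), (↑u - c) ∈ Set.Icc 0 (R.graph.len e) := by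
    rintro ⟨u, hu⟩
    exact ⟨by simp; linarith [hu.1], by have := hu.2; simp; linarith [ht.2]⟩
  set f₂ : ↥(Set.Ioo c (c + t)) → G :=
    fun u => R.graph.param e (↑u - c) with hf₂
  have hcont₁ : Continuous f₁ :=
    R.continuous_π.comp (((geo_contOn (X := X) hiso).mono hsub).restrict)
  have hcont₂ : Continuous f₂ := by
    have hval : Continuous (fun u : ↥(Set.Ioo c (c + t)) =>
        (⟨↑u - c, hmemIcc u⟩ : ↥(Set.Icc (0:ℝ) (R.graph.len e)))) :=
      Continuous.subtype_mk (by fun_prop) _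
    exact ((R.graph.param_lipschitz e).continuousOn.restrict).comp hval
  have hudS : ∀ u : ↥(Set.Ioo c (c + t)), R.dStar (f₁ u) = ↑u := by
    intro u
    exact dS_geo R hγ0 hiso (hsub u.2)
  have hSeq : {u | f₁ u ∉ Kset R e} = {u | f₁ u = f₂ u} := by
    ext u
    constructor
    · intro hu
      have := not_Kset_char R hu
      have h2 : R.dStar (f₁ u) - c = ↑u - c := by rw [hudS u]
      show f₁ u = R.graph.param e (↑u - c)
      rw [← hudS u]
      exact this.2
    · intro hu
      have hint : (↑u - c) ∈ Set.Ioo 0 (R.graph.len e) := by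
        obtain ⟨u, hu'⟩ := u
        exact ⟨by simp; linarith [hu'.1], by have := hu'.2; simp; linarith [ht.2]⟩
      show f₁ u ∉ Kset R e
      rw [Set.mem_setOf_eq] at hu
      rw [hu]
      exact interior_not_Kset R hint
  have hclopen : IsClopen {u | f₁ u ∉ Kset R e} := by
    constructor
    · rw [hSeq]; exact isClosed_eq hcont₁ hcont₂
    · exact (isClosed_Kset R e).isOpen_compl.preimage hcont₁
  have hne : {u | f₁ u ∉ Kset R e}.Nonempty := by
    have hmem : Set.Ioo c (c + t) ∈ nhdsWithin (c + t) (Set.Iio (c + t)) :=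
      Ioo_mem_nhdsLT_of_mem ⟨hht, le_rfl⟩
    obtain ⟨u, hu1, hu2⟩ := (hseed.and (Filter.eventually_of_mem hmem (fun _ h => h))).exists
    exact ⟨⟨u, hu2⟩, hu1⟩
  have huniv := hclopen.eq_univ hne
  intro s hs
  rcases eq_or_lt_of_le hs.1 with h0 | h0
  · -- s = 0 : limit argument
    subst h0
    have hne0 : t ≠ 0 := ne_of_gt ht.1
    -- use sequence approach via filter 𝓝[>] 0
    have hlim1 : Filter.Tendsto (fun s => R.π (γ (c + s))) (nhdsWithin 0 (Set.Ioi 0))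
        (nhds (R.π (γ (c + 0)))) := by
      have hco : ContinuousWithinAt (fun s : ℝ => γ (c + s)) (Set.Icc 0 t) 0 := by
        refine ContinuousWithinAt.comp ((geo_contOn (X := X) hiso).continuousWithinAt ?_)
          ((continuous_const.add continuous_id).continuousWithinAt) ?_
        · exact ⟨by linarith, by linarith [ht.1]⟩
        · intro u hu
          refine ⟨?_, ?_⟩
          · linarith [hu.1, hc0]
          · linarith [hu.2]
      have hmono : nhdsWithin (0:ℝ) (Set.Ioi 0) ≤ nhdsWithin (0:ℝ) (Set.Icc 0 t) :=
        nhdsWithin_le_of_mem (Filter.mem_of_superset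
          (Ioo_mem_nhdsGT_of_mem ⟨le_rfl, ht.1⟩) Set.Ioo_subset_Icc_self)
      exact (R.continuous_π.tendsto _).comp (hco.mono_left hmono)
    have hlim2 : Filter.Tendsto (fun s => R.graph.param e s) (nhdsWithin 0 (Set.Ioi 0))
        (nhds (R.graph.param e 0)) := by
      have hco : ContinuousWithinAt (R.graph.param e) (Set.Icc 0 (R.graph.len e)) 0 :=
        (R.graph.param_lipschitz e).continuousOn.continuousWithinAt
          ⟨le_rfl, (R.graph.len_pos e).le⟩
      have hmono : nhdsWithin (0:ℝ) (Set.Ioi 0) ≤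
          nhdsWithin (0:ℝ) (Set.Icc 0 (R.graph.len e)) :=
        nhdsWithin_le_of_mem (Filter.mem_of_superset
          (Ioo_mem_nhdsGT_of_mem ⟨le_rfl, lt_of_lt_of_le ht.1 ht.2⟩)
          Set.Ioo_subset_Icc_self)
      exact hco.mono_left hmono
    have heqev : (fun s => R.π (γ (c + s))) =ᶠ[nhdsWithin 0 (Set.Ioi 0)]
        (fun s => R.graph.param e s) := by
      filter_upwards [Ioo_mem_nhdsGT_of_mem (Set.left_mem_Ico.mpr ht.1)] with s hs'
      have hu : (⟨c + s, by constructor <;> simp <;> [linarith [hs'.1]; linarith [hs'.2]]⟩ :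
          ↥(Set.Ioo c (c + t))) ∈ {u | f₁ u ∉ Kset R e} := huniv ▸ Set.mem_univ _
      rw [hSeq] at hu
      have : R.π (γ (c + s)) = R.graph.param e (c + s - c) := hu
      simpa using this
    have := tendsto_nhds_unique (hlim1.congr' heqev) hlim2
    simpa using this
  · -- s ∈ Ioo 0 t
    have hu : (⟨c + s, by constructor <;> simp <;> [linarith; linarith [hs.2]]⟩ :
        ↥(Set.Ioo c (c + t))) ∈ {u | f₁ u ∉ Kset R e} := huniv ▸ Set.mem_univ _
    rw [hSeq] at hu
    have : R.π (γ (c + s)) = R.graph.param e (c + s - c) := hu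
    simpa using this

/-! ### Descent instantiations -/

omit [CompactSpace X] in
lemma dist_r_geo {γ : ℝ → X} {H : ℝ} {z : X} (hγ0 : γ 0 = r) (hγH : γ H = z)
    (hH0 : 0 ≤ H)
    (hiso : ∀ s ∈ Set.Icc (0:ℝ) H, ∀ t ∈ Set.Icc (0:ℝ) H, dist (γ s) (γ t) = |s - t|) :
    dist r z = H := by
  rw [← hγ0, ← hγH, hiso 0 ⟨le_rfl, hH0⟩ H ⟨hH0, le_rfl⟩, zero_sub, abs_neg, abs_of_nonneg hH0]

omit [CompactSpace X] in
lemma eventually_avoid_im {γ : ℝ → X} {H : ℝ} {z : X} {v : G}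
    (hγ0 : γ 0 = r)
    (hiso : ∀ s ∈ Set.Icc (0:ℝ) H, ∀ t ∈ Set.Icc (0:ℝ) H, dist (γ s) (γ t) = |s - t|)
    (hγH : γ H = z) (hπz : R.π z = v) (hH0 : 0 < H) (hvert : v ∈ R.graph.vertexSet)
    {e' : R.graph.E} (hni : R.graph.tgt e' ≠ v) :
    ∀ᶠ u in nhdsWithin H (Set.Iio H), R.π (γ u) ∉ im R e' := by
  by_cases hmem : v ∈ im R e'
  · obtain ⟨τ, hτ, heqv⟩ := hmem
    have hτ0 : τ = 0 := by
      rcases eq_or_lt_of_le hτ.1 with h0 | h0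
      · exact h0.symm
      rcases eq_or_lt_of_le hτ.2 with h1 | h1
      · exfalso
        apply hni
        show R.graph.param e' (R.graph.len e') = v
        rw [← h1]; exact heqv
      · exact absurd heqv.symm (vertex_not_interior R hvert ⟨h0, h1⟩)
    have hcEv : cE R e' = R.dStar v := by
      subst hτ0
      exact congrArg R.dStar heqv
    have hdSv : R.dStar v = H := by
      rw [← hπz, R.dStar_π, dist_r_geo (X := X) hγ0 hγH hH0.le hiso]
    filter_upwards [Ioo_mem_nhdsLT_of_mem ⟨hH0, le_rfl⟩] with u hu
    rintro ⟨τ', hτ', heq'⟩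
    have hdSu : R.dStar (R.π (γ u)) = u := dS_geo R hγ0 hiso ⟨hu.1.le, hu.2.le⟩
    rw [← heq', dS_param R hτ'] at hdSu
    have h8 : cE R e' + τ' = u := hdSu
    rw [hcEv, hdSv] at h8
    have h2 := hu.2
    linarith [hτ'.1]
  · have htd := geo_tendsto R hiso hH0 hγH
    rw [hπz] at htd
    exact htd.eventually ((isClosed_im R e').isOpen_compl.eventually_mem hmem)

omit [CompactSpace X] in
lemma descend_interior (hX : IsGeodesicSpace X) {e : R.graph.E} {t : ℝ}
    (ht : t ∈ Set.Ioo 0 (R.graph.len e)) {z : X} (hz : R.π z = R.graph.param e t) :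
    ∀ s ∈ Set.Icc 0 t, ∃ z', R.π z' = R.graph.param e s ∧ dist z z' = t - s := by
  have hdz : dist r z = cE R e + t := by
    rw [← R.dStar_π z, hz, dS_param R (Set.Ioo_subset_Icc_self ht)]; rfl
  obtain ⟨γ, hγ0, hγH, hiso⟩ := hX r z
  rw [hdz] at hγH hiso
  have hc0 : 0 ≤ cE R e := cE_nonneg R e
  have hH0 : 0 < cE R e + t := by linarith [ht.1]
  have hseed : ∀ᶠ u in nhdsWithin (cE R e + t) (Set.Iio (cE R e + t)),
      R.π (γ u) ∉ Kset R e := by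
    have htd := geo_tendsto R hiso hH0 hγH
    rw [hz] at htd
    exact htd.eventually ((isClosed_Kset R e).isOpen_compl.eventually_mem
      (interior_not_Kset R ht))
  have hcore := descend_core R ⟨ht.1, ht.2.le⟩ hγ0 hiso hseed
  intro s hs
  rcases eq_or_lt_of_le hs.2 with h1 | h1
  · subst h1
    exact ⟨z, hz, by simp⟩
  · refine ⟨γ (cE R e + s), hcore s ⟨hs.1, h1⟩, ?_⟩
    rw [← hγH, hiso (cE R e + t) ⟨hH0.le, le_rfl⟩ (cE R e + s)
      ⟨by linarith [hs.1], by linarith⟩]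
    rw [abs_of_nonneg (by linarith)]
    ring

omit [CompactSpace X] in
lemma descend_tgt (hX : IsGeodesicSpace X) {e : R.graph.E}
    (huniq : ∀ e', R.graph.tgt e' = R.graph.tgt e → e' = e)
    {z : X} (hz : R.π z = R.graph.tgt e) :
    ∀ s ∈ Set.Icc 0 (R.graph.len e),
      ∃ z', R.π z' = R.graph.param e s ∧ dist z z' = R.graph.len e - s := by
  have hlen := R.graph.len_pos e
  have hc0 : 0 ≤ cE R e := cE_nonneg R e
  have hdz : dist r z = cE R e + R.graph.len e := by
    rw [← R.dStar_π z, hz, dS_src_tgt]; rfl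
  obtain ⟨γ, hγ0, hγH, hiso⟩ := hX r z
  rw [hdz] at hγH hiso
  have hH0 : 0 < cE R e + R.graph.len e := by linarith
  have hvert : R.graph.tgt e ∈ R.graph.vertexSet := ⟨e, Or.inr rfl⟩
  have hseed : ∀ᶠ u in nhdsWithin (cE R e + R.graph.len e)
      (Set.Iio (cE R e + R.graph.len e)), R.π (γ u) ∉ Kset R e := by
    have h1 : ∀ᶠ u in nhdsWithin (cE R e + R.graph.len e)
        (Set.Iio (cE R e + R.graph.len e)),
        ∀ e' : R.graph.E, e' ≠ e → R.π (γ u) ∉ im R e' := by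
      rw [eventually_all]
      intro e'
      by_cases he' : e' = e
      · filter_upwards with u hne
        exact absurd he' hne
      · have hni : R.graph.tgt e' ≠ R.graph.tgt e := fun hh => he' (huniq e' hh)
        filter_upwards [eventually_avoid_im R hγ0 hiso hγH hz hH0 hvert hni] with u hu _
        exact hu
    filter_upwards [h1, Ioo_mem_nhdsLT_of_mem
      (⟨by linarith, le_rfl⟩ : cE R e + R.graph.len e ∈
        Set.Ioc (cE R e) (cE R e + R.graph.len e))] with u hu1 hu2
    intro hK
    have hdSu : R.dStar (R.π (γ u)) = u := dS_geo R hγ0 hiso ⟨by linarith [hu2.1], hu2.2.le⟩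
    rcases hK with hK | hK
    · simp only [Set.mem_iUnion, Set.mem_setOf_eq] at hK
      obtain ⟨e', he', hin⟩ := hK
      exact hu1 e' he' hin
    · rcases hK with hK | hK
      · rw [hK] at hdSu
        have : cE R e = u := hdSu
        linarith [hu2.1]
      · rw [Set.mem_singleton_iff.mp hK] at hdSu
        rw [dS_src_tgt] at hdSu
        have hcer : cE R e = R.dStar (R.graph.src e) := rfl
        linarith [hu2.2]
  have hcore := descend_core R ⟨hlen, le_rfl⟩ hγ0 hiso hseed
  intro s hs
  rcases eq_or_lt_of_le hs.2 with h1 | h1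
  · subst h1
    exact ⟨z, hz, by simp⟩
  · refine ⟨γ (cE R e + s), hcore s ⟨hs.1, h1⟩, ?_⟩
    rw [← hγH, hiso (cE R e + R.graph.len e) ⟨hH0.le, le_rfl⟩ (cE R e + s)
      ⟨by linarith [hs.1], by linarith⟩]
    rw [abs_of_nonneg (by linarith)]
    ring

omit [CompactSpace X] in
lemma exists_incoming (hX : IsGeodesicSpace X) {v : G} (hvert : v ∈ R.graph.vertexSet)
    (hpos : 0 < R.dStar v) : ∃ e, R.graph.tgt e = v := by
  by_contra hno
  push_neg at hno
  obtain ⟨z, hz⟩ := R.surj v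
  have hdz : dist r z = R.dStar v := by rw [← R.dStar_π z, hz]
  obtain ⟨γ, hγ0, hγH, hiso⟩ := hX r z
  rw [hdz] at hγH hiso
  have hav : ∀ᶠ u in nhdsWithin (R.dStar v) (Set.Iio (R.dStar v)),
      ∀ e' : R.graph.E, R.π (γ u) ∉ im R e' := by
    rw [eventually_all]
    intro e'
    exact eventually_avoid_im R hγ0 hiso hγH hz hpos hvert (hno e')
  obtain ⟨u, hu⟩ := hav.exists
  obtain ⟨e'', τ, hτ, heq⟩ := R.graph.cover (R.π (γ u))
  exact hu e'' ⟨τ, hτ, heq⟩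

lemma steer (hX : IsGeodesicSpace X) {e : R.graph.E} {s : ℝ}
    (hs : s ∈ Set.Ico 0 (R.graph.len e)) {ε : ℝ} (hε : 0 < ε) :
    ∃ w₀ w', R.π w₀ = R.graph.tgt e ∧ R.π w' = R.graph.param e s ∧
      dist w₀ w' ≤ (R.graph.len e - s) + ε := by
  set L := R.graph.len e with hL
  have hsL : s < L := hs.2
  set t : ℕ → ℝ := fun n => L - (L - s) / (n + 2) with htdef
  have htmem : ∀ n, t n ∈ Set.Ioo s L := by
    intro n
    have h2 : (0:ℝ) < (n:ℝ) + 2 := by positivity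
    constructor
    · have : (L - s) / (n + 2) < L - s := by
        rw [div_lt_iff₀ h2]
        nlinarith
      simp only [htdef]; linarith
    · have : 0 < (L - s) / (n + 2) := div_pos (by linarith) h2
      simp only [htdef]; linarith
  have htlim : Filter.Tendsto t Filter.atTop (nhds L) := by
    have h1 : Filter.Tendsto (fun n : ℕ => (L - s) / (n + 2)) Filter.atTop (nhds 0) :=
      Filter.Tendsto.div_atTop tendsto_const_nhds
        (tendsto_atTop_add_const_right _ 2 tendsto_natCast_atTop_atTop)
    have := (tendsto_const_nhds (x := L) (f := Filter.atTop (α := ℕ))).sub h1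
    simpa using this
  have hw : ∀ n, ∃ w, R.π w = R.graph.param e (t n) := fun n => R.surj _
  choose w hwπ using hw
  have hw' : ∀ n, ∃ w', R.π w' = R.graph.param e s ∧ dist (w n) w' = t n - s := by
    intro n
    exact descend_interior R hX ⟨lt_of_le_of_lt hs.1 (htmem n).1,
      (htmem n).2⟩ (hwπ n) s ⟨hs.1, (htmem n).1.le⟩
  choose w' hw'π hw'd using hw'
  obtain ⟨wstar, -, φ, hφ, hconv⟩ := isCompact_univ.tendsto_subseq
    (x := w) (fun n => Set.mem_univ _)
  have hπwstar : R.π wstar = R.graph.tgt e := by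
    have h1 : Filter.Tendsto (fun n => R.π (w (φ n))) Filter.atTop (nhds (R.π wstar)) :=
      (R.continuous_π.tendsto _).comp hconv
    have h2 : Filter.Tendsto (fun n => R.π (w (φ n))) Filter.atTop
        (nhds (R.graph.tgt e)) := by
      have hparam : ContinuousWithinAt (R.graph.param e) (Set.Icc 0 L) L :=
        (R.graph.param_lipschitz e).continuousOn.continuousWithinAt
          ⟨(lt_of_le_of_lt hs.1 hsL).le, le_rfl⟩
      have htφ : Filter.Tendsto (fun n => t (φ n)) Filter.atTop
          (nhdsWithin L (Set.Icc 0 L)) := by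
        rw [tendsto_nhdsWithin_iff]
        constructor
        · exact htlim.comp hφ.tendsto_atTop
        · filter_upwards with n
          exact ⟨le_trans hs.1 (htmem (φ n)).1.le, (htmem (φ n)).2.le⟩
      have := hparam.tendsto.comp htφ
      simp only [Function.comp_def] at this ⊢
      convert this using 2
      exact (hwπ _)
      rfl
    exact tendsto_nhds_unique h1 h2
  obtain ⟨N, hN⟩ := (Metric.tendsto_atTop.mp hconv) ε hε
  refine ⟨wstar, w' (φ N), hπwstar, hw'π (φ N), ?_⟩
  have h3 := hw'd (φ N)
  have h4 := hN N le_rfl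
  have h5 : dist wstar (w' (φ N)) ≤ dist wstar (w (φ N)) + dist (w (φ N)) (w' (φ N)) :=
    dist_triangle _ _ _
  have h6 : dist wstar (w (φ N)) < ε := by
    rw [dist_comm]; exact h4
  have h7 : t (φ N) - s ≤ L - s := by
    have := (htmem (φ N)).2
    linarith
  linarith

/-! ### Vertex counting -/

omit [CompactSpace X] in
lemma vertexSet_finite : R.graph.vertexSet.Finite := by
  apply Set.Finite.subset ((Set.finite_range R.graph.src).union (Set.finite_range R.graph.tgt))
  rintro v ⟨e, h | h⟩
  · exact Or.inl ⟨e, h.symm⟩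
  · exact Or.inr ⟨e, h.symm⟩

omit [CompactSpace X] in
lemma dS_zero {v : G} (hv : R.dStar v = 0) : v = R.π r := by
  obtain ⟨z, rfl⟩ := R.surj v
  rw [R.dStar_π] at hv
  rw [dist_eq_zero] at hv
  exact congrArg R.π hv.symm

omit [CompactSpace X] in
lemma merging_card_le (hX : IsGeodesicSpace X) (S : Finset G)
    (hS : ∀ v ∈ S, R.IsMergingVertex v) : S.card ≤ R.graph.betti1 := by
  classical
  set T : Finset G := Finset.univ.image R.graph.tgt with hT
  have hST : S ⊆ T := by
    intro v hv
    obtain ⟨e₁, e₂, hne, h₁, h₂⟩ := hS v hv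
    exact Finset.mem_image.mpr ⟨e₁, Finset.mem_univ _, h₁⟩
  set f : G → ℕ := fun v => (Finset.univ.filter (fun e => R.graph.tgt e = v)).card with hf
  have hsum : Fintype.card R.graph.E = ∑ v ∈ T, f v := by
    rw [← Finset.card_univ]
    exact Finset.card_eq_sum_card_image R.graph.tgt Finset.univ
  have h2 : ∀ v ∈ S, 2 ≤ f v := by
    intro v hv
    obtain ⟨e₁, e₂, hne, h₁, h₂⟩ := hS v hv
    have hsub : ({e₁, e₂} : Finset R.graph.E) ⊆
        Finset.univ.filter (fun e => R.graph.tgt e = v) := by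
      intro e he
      rcases Finset.mem_insert.mp he with h | h
      · subst h; exact Finset.mem_filter.mpr ⟨Finset.mem_univ _, h₁⟩
      · rw [Finset.mem_singleton.mp h]; exact Finset.mem_filter.mpr ⟨Finset.mem_univ _, h₂⟩
    calc 2 = ({e₁, e₂} : Finset R.graph.E).card := (Finset.card_pair hne).symm
    _ ≤ _ := Finset.card_le_card hsub
  have h1 : ∀ v ∈ T \ S, 1 ≤ f v := by
    intro v hv
    obtain ⟨e, -, he⟩ := Finset.mem_image.mp (Finset.mem_sdiff.mp hv).1
    exact Finset.card_pos.mpr ⟨e, Finset.mem_filter.mpr ⟨Finset.mem_univ _, he⟩⟩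
  have hET : S.card + T.card ≤ Fintype.card R.graph.E := by
    have hA : (T \ S).card • 1 ≤ ∑ v ∈ T \ S, f v :=
      Finset.card_nsmul_le_sum _ _ _ h1
    have hB : S.card • 2 ≤ ∑ v ∈ S, f v :=
      Finset.card_nsmul_le_sum _ _ _ h2
    have hC : ∑ v ∈ T \ S, f v + ∑ v ∈ S, f v = ∑ v ∈ T, f v := Finset.sum_sdiff hST
    have hD : (T \ S).card + S.card = T.card := Finset.card_sdiff_add_card_eq_card hST
    simp only [smul_eq_mul, mul_one, mul_two] at hA hB
    omega
  set VF : Finset G := (vertexSet_finite R).toFinset with hVF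
  have hVT : VF ⊆ T ∪ {R.π r} := by
    intro v hv
    have hv' : v ∈ R.graph.vertexSet := (Set.Finite.mem_toFinset _).mp hv
    rcases eq_or_lt_of_le (dS_nonneg R v) with h0 | h0
    · exact Finset.mem_union.mpr (Or.inr (Finset.mem_singleton.mpr (dS_zero R h0.symm)))
    · obtain ⟨e, he⟩ := exists_incoming R hX hv' h0
      exact Finset.mem_union.mpr (Or.inl (Finset.mem_image.mpr ⟨e, Finset.mem_univ _, he⟩))
  have hV : VF.card ≤ T.card + 1 := by
    calc VF.card ≤ (T ∪ {R.π r}).card := Finset.card_le_card hVT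
    _ ≤ T.card + ({R.π r} : Finset G).card := Finset.card_union_le _ _
    _ = T.card + 1 := by rw [Finset.card_singleton]
  have hcardV : Nat.card R.graph.vertexSet = VF.card := by
    rw [Nat.card_coe_set_eq, ← (vertexSet_finite R).coe_toFinset, ncard_coe_finset]
  unfold MetricGraphStruct.betti1
  rw [Nat.card_eq_fintype_card, hcardV]
  omega

/-! ### Chains realize the distance -/

omit [CompactSpace X] in
lemma chain_vertex_to_root (hX : IsGeodesicSpace X) :
    ∀ n (v : G), v ∈ R.graph.vertexSet →
      (((vertexSet_finite R).toFinset.filter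
        (fun w => R.dStar w < R.dStar v)).card ≤ n) →
      ∃ L, Chain R v (R.π r) L := by
  intro n
  induction n with
  | zero =>
    intro v hv hn
    rcases eq_or_lt_of_le (dS_nonneg R v) with h0 | h0
    · exact ⟨[], (dS_zero R h0.symm) ▸ Chain.nil v⟩
    · exfalso
      obtain ⟨e, he⟩ := exists_incoming R hX hv h0
      have hsrc : R.graph.src e ∈ (vertexSet_finite R).toFinset :=
        (Set.Finite.mem_toFinset _).mpr ⟨e, Or.inl rfl⟩
      have hlt : R.dStar (R.graph.src e) < R.dStar v := by
        rw [← he, dS_src_tgt]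
        linarith [R.graph.len_pos e]
      have : R.graph.src e ∈ (vertexSet_finite R).toFinset.filter
          (fun w => R.dStar w < R.dStar v) := Finset.mem_filter.mpr ⟨hsrc, hlt⟩
      have := Finset.card_pos.mpr ⟨_, this⟩
      omega
  | succ n ih =>
    intro v hv hn
    rcases eq_or_lt_of_le (dS_nonneg R v) with h0 | h0
    · exact ⟨[], (dS_zero R h0.symm) ▸ Chain.nil v⟩
    · obtain ⟨e, he⟩ := exists_incoming R hX hv h0
      have hlt : R.dStar (R.graph.src e) < R.dStar v := by
        rw [← he, dS_src_tgt]
        linarith [R.graph.len_pos e]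
      have hsrcv : R.graph.src e ∈ R.graph.vertexSet := ⟨e, Or.inl rfl⟩
      have hss : (vertexSet_finite R).toFinset.filter
            (fun w => R.dStar w < R.dStar (R.graph.src e)) ⊂
          (vertexSet_finite R).toFinset.filter (fun w => R.dStar w < R.dStar v) := by
        constructor
        · intro w hw
          obtain ⟨hw1, hw2⟩ := Finset.mem_filter.mp hw
          exact Finset.mem_filter.mpr ⟨hw1, hw2.trans hlt⟩
        · intro hcon
          have : R.graph.src e ∈ (vertexSet_finite R).toFinset.filter
              (fun w => R.dStar w < R.dStar (R.graph.src e)) :=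
            hcon (Finset.mem_filter.mpr ⟨(Set.Finite.mem_toFinset _).mpr hsrcv, hlt⟩)
          exact absurd (Finset.mem_filter.mp this).2 (lt_irrefl _)
      have hcard := Finset.card_lt_card hss
      obtain ⟨L', hL'⟩ := ih (R.graph.src e) hsrcv (by omega)
      set l : Lnk R := ⟨e, R.graph.len e, 0⟩ with hl
      have hok : LinkOK R l := ⟨⟨(R.graph.len_pos e).le, le_rfl⟩, ⟨le_rfl, (R.graph.len_pos e).le⟩⟩
      have hTgt : lTgt R l = R.graph.src e := rfl
      have hSrc : lSrc R l = v := he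
      exact ⟨l :: L', hSrc ▸ Chain.cons hok (hTgt ▸ hL')⟩

omit [CompactSpace X] in
lemma chain_to_root (hX : IsGeodesicSpace X) (p : G) : ∃ L, Chain R p (R.π r) L := by
  obtain ⟨e, τ, hτ, heq⟩ := R.graph.cover p
  set l : Lnk R := ⟨e, τ, 0⟩ with hl
  have hok : LinkOK R l := ⟨hτ, ⟨le_rfl, (R.graph.len_pos e).le⟩⟩
  obtain ⟨L', hL'⟩ := chain_vertex_to_root R hX
    (((vertexSet_finite R).toFinset.filter
        (fun w => R.dStar w < R.dStar (R.graph.src e))).card)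
    (R.graph.src e) ⟨e, Or.inl rfl⟩ le_rfl
  have hTgt : lTgt R l = R.graph.src e := rfl
  have hSrc : lSrc R l = p := heq
  exact ⟨l :: L', hSrc ▸ Chain.cons hok (hTgt ▸ hL')⟩

def costSet (p q : G) : Set ℝ := {c | ∃ L, Chain R p q L ∧ cost R L = c}

omit [CompactSpace X] in
lemma costSet_nonempty (hX : IsGeodesicSpace X) (p q : G) : (costSet R p q).Nonempty := by
  obtain ⟨L₁, hL₁⟩ := chain_to_root R hX p
  obtain ⟨L₂, hL₂⟩ := chain_to_root R hX q
  exact ⟨_, L₁ ++ (L₂.reverse.map (lFlip R)), chain_append R hL₁ (chain_symm R hL₂), rfl⟩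

omit [CompactSpace X] in
lemma costSet_nonneg (p q : G) : ∀ c ∈ costSet R p q, 0 ≤ c := by
  rintro c ⟨L, -, rfl⟩
  exact cost_nonneg R L

omit [CompactSpace X] in
lemma costSet_bddBelow (p q : G) : BddBelow (costSet R p q) :=
  ⟨0, fun c hc => costSet_nonneg R p q c hc⟩

omit [CompactSpace X] in
lemma costSet_symm (p q : G) : costSet R p q = costSet R q p := by
  ext c
  constructor <;> rintro ⟨L, hL, rfl⟩ <;>
    exact ⟨_, chain_symm R hL, cost_reverse_flip R L⟩

lemma exists_chain_le (hX : IsGeodesicSpace X) (p q : G) {ε : ℝ} (hε : 0 < ε) :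
    ∃ L, Chain R p q L ∧ cost R L ≤ dist p q + ε := by
  haveI : CompactSpace G := by
    constructor
    rw [← Set.image_univ_of_surjective R.surj]
    exact isCompact_univ.image R.continuous_π
  set D₀ : ℝ := Metric.diam (Set.univ : Set G) + 1 with hD₀
  have hD₀0 : 0 ≤ D₀ := by
    have := Metric.diam_nonneg (s := (Set.univ : Set G))
    linarith
  set δ : G → G → ℝ := fun p q => min (sInf (costSet R p q)) D₀ with hδdef
  have hδnonneg : ∀ p q, 0 ≤ δ p q := by
    intro p q
    exact le_min (Real.sInf_nonneg (costSet_nonneg R p q)) hD₀0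
  have hrefl : ∀ p, δ p p = 0 := by
    intro p
    have h1 : sInf (costSet R p p) ≤ 0 :=
      csInf_le (costSet_bddBelow R p p) ⟨[], Chain.nil p, rfl⟩
    have h2 := Real.sInf_nonneg (costSet_nonneg R p p)
    have : sInf (costSet R p p) = 0 := le_antisymm h1 h2
    rw [hδdef]; simp only [this]
    exact min_eq_left hD₀0
  have hsymm : ∀ p q, δ p q = δ q p := by
    intro p q
    rw [hδdef]; simp only [costSet_symm R p q]
  have htri : ∀ p q s, δ p s ≤ δ p q + δ q s := by
    intro p q s
    rcases le_or_gt D₀ (sInf (costSet R p q)) with h | h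
    · have : δ p q = D₀ := min_eq_right h
      rw [this]
      have := hδnonneg q s
      have := min_le_right (sInf (costSet R p s)) D₀
      linarith
    rcases le_or_gt D₀ (sInf (costSet R q s)) with h' | h'
    · have : δ q s = D₀ := min_eq_right h'
      rw [this]
      have := hδnonneg p q
      have := min_le_right (sInf (costSet R p s)) D₀
      linarith
    · have hpq : δ p q = sInf (costSet R p q) := min_eq_left h.le
      have hqs : δ q s = sInf (costSet R q s) := min_eq_left h'.le
      rw [hpq, hqs]
      refine le_trans (min_le_left _ _) ?_
      refine le_of_forall_pos_le_add ?_
      intro ε' hε'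
      obtain ⟨c₁, ⟨L₁, hL₁, rfl⟩, hc₁⟩ :=
        Real.lt_sInf_add_pos (costSet_nonempty R hX p q) (half_pos hε')
      obtain ⟨c₂, ⟨L₂, hL₂, rfl⟩, hc₂⟩ :=
        Real.lt_sInf_add_pos (costSet_nonempty R hX q s) (half_pos hε')
      have hmem : cost R (L₁ ++ L₂) ∈ costSet R p s :=
        ⟨_, chain_append R hL₁ hL₂, rfl⟩
      have h3 := csInf_le (costSet_bddBelow R p s) hmem
      rw [cost_append] at h3
      linarith
  have hedge : ∀ e, ∀ s ∈ Set.Icc 0 (R.graph.len e), ∀ t ∈ Set.Icc 0 (R.graph.len e),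
      δ (R.graph.param e s) (R.graph.param e t) ≤ |s - t| := by
    intro e s hs t ht
    refine le_trans (min_le_left _ _) ?_
    refine csInf_le (costSet_bddBelow R _ _) ?_
    refine ⟨[⟨e, s, t⟩], ?_, by simp [cost_cons, cost_nil, lCost]⟩
    exact Chain.cons (l := ⟨e, s, t⟩) ⟨hs, ht⟩ (Chain.nil _)
  have hmax := R.graph.dist_maximal δ hrefl hsymm htri hedge p q
  have hinf : sInf (costSet R p q) ≤ dist p q := by
    rcases le_or_gt (sInf (costSet R p q)) D₀ with h | h
    · exact le_trans (le_of_eq (inf_eq_left.mpr h).symm) hmax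
    · exfalso
      have hmax' : D₀ ≤ dist p q := le_trans (le_of_eq (inf_eq_right.mpr h.le).symm) hmax
      have hdd : dist p q ≤ Metric.diam (Set.univ : Set G) :=
        Metric.dist_le_diam_of_mem isCompact_univ.isBounded
          (Set.mem_univ _) (Set.mem_univ _)
      rw [hD₀] at hmax'
      linarith
  obtain ⟨c, ⟨L, hL, rfl⟩, hc⟩ := Real.lt_sInf_add_pos (costSet_nonempty R hX p q) hε
  exact ⟨L, hL, by linarith⟩

/-! ### Chain normalization -/

def isUp (l : Lnk R) : Prop := l.2.1 < l.2.2

def badPair (l l' : Lnk R) : Prop :=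
  l.1 = l'.1 ∧ l.2.2 = l'.2.1 ∧ ¬(isUp R l ↔ isUp R l')

def goodPair (l l' : Lnk R) : Prop := ¬ badPair R l l'

omit [CompactSpace X] in
lemma chain_cons_inv {p q : G} {l : Lnk R} {t : List (Lnk R)} (h : Chain R p q (l :: t)) :
    p = lSrc R l ∧ LinkOK R l ∧ Chain R (lTgt R l) q t := by
  cases h with
  | cons hok h' => exact ⟨rfl, hok, h'⟩

omit [CompactSpace X] in
lemma chain_nil_inv {p q : G} (h : Chain R p q []) : p = q := by
  cases h; rfl

omit [CompactSpace X] in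
lemma nodup_phase : ∀ n (L : List (Lnk R)) (p q : G), L.length ≤ n → Chain R p q L →
    ∃ L', Chain R p q L' ∧ cost R L' ≤ cost R L ∧
      (p :: L'.map (lTgt R)).Nodup ∧ ∀ a ∈ L'.map (lTgt R), a ∈ L.map (lTgt R) := by
  intro n
  induction n with
  | zero =>
    intro L p q hlen hch
    rw [Nat.le_zero, List.length_eq_zero_iff] at hlen
    subst hlen
    exact ⟨[], hch, le_rfl, List.nodup_singleton p, by simp⟩
  | succ n ih =>
    intro L p q hlen hch
    cases L with
    | nil => exact ⟨[], hch, le_rfl, List.nodup_singleton p, by simp⟩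
    | cons l t =>
      by_cases hp : p ∈ (l :: t).map (lTgt R)
      · obtain ⟨l₀, hl₀mem, hl₀⟩ := List.mem_map.mp hp
        obtain ⟨s, t₂, hdecomp⟩ := List.append_of_mem hl₀mem
        rw [hdecomp] at hch
        obtain ⟨m, h₁, h₂⟩ := chain_split R hch
        obtain ⟨-, -, h₃⟩ := chain_cons_inv R h₂
        rw [hl₀] at h₃
        have hlen₂ : t₂.length ≤ n := by
          have h9 := congrArg List.length hdecomp
          simp only [List.length_append, List.length_cons] at h9
          simp only [List.length_cons] at hlen
          omega
        obtain ⟨L', hch', hc', hnd', hsub'⟩ := ih t₂ p q hlen₂ h₃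
        refine ⟨L', hch', ?_, hnd', ?_⟩
        · refine hc'.trans ?_
          rw [hdecomp, cost_append, cost_cons]
          have := cost_nonneg R s
          have := lCost_nonneg R l₀
          linarith
        · intro a ha
          have := hsub' a ha
          rw [hdecomp]
          simp only [List.map_append, List.mem_append, List.map_cons, List.mem_cons]
          right; right
          exact this
      · obtain ⟨hpeq, hok, h'⟩ := chain_cons_inv R hch
        have hlen' : t.length ≤ n := by simp at hlen; omega
        obtain ⟨L'', hch'', hc'', hnd'', hsub''⟩ := ih t (lTgt R l) q hlen' h'
        refine ⟨l :: L'', hpeq ▸ Chain.cons hok hch'', ?_, ?_, ?_⟩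
        · rw [cost_cons, cost_cons]
          linarith
        · rw [List.map_cons, List.nodup_cons]
          refine ⟨?_, hnd''⟩
          intro hmem
          apply hp
          rcases List.mem_cons.mp hmem with h | h
          · rw [List.map_cons]; exact List.mem_cons.mpr (Or.inl h)
          · rw [List.map_cons]; exact List.mem_cons.mpr (Or.inr (hsub'' p h))
        · intro a ha
          rw [List.map_cons] at ha ⊢
          rcases List.mem_cons.mp ha with h | h
          · exact List.mem_cons.mpr (Or.inl h)
          · exact List.mem_cons.mpr (Or.inr (hsub'' a h))

omit [CompactSpace X] in
lemma find_bad : ∀ L : List (Lnk R), List.Chain' (goodPair R) L ∨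
    ∃ L₁ : List (Lnk R), ∃ l l' : Lnk R, ∃ L₂ : List (Lnk R),
      L = L₁ ++ l :: l' :: L₂ ∧ badPair R l l' := by
  intro L
  induction L with
  | nil => exact Or.inl List.isChain_nil
  | cons l t ih =>
    cases t with
    | nil => exact Or.inl (List.isChain_singleton l)
    | cons l' t' =>
      by_cases hb : badPair R l l'
      · exact Or.inr ⟨[], l, l', t', rfl, hb⟩
      · rcases ih with h | ⟨L₁, a, b, L₂, heq, hbad⟩
        · exact Or.inl (List.isChain_cons_cons.mpr ⟨hb, h⟩)
        · exact Or.inr ⟨l :: L₁, a, b, L₂, by rw [heq]; rfl, hbad⟩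

omit [CompactSpace X] in
lemma good_phase : ∀ n (L : List (Lnk R)) (p q : G), L.length ≤ n → Chain R p q L →
    ∃ L', Chain R p q L' ∧ cost R L' ≤ cost R L ∧
      (p :: L'.map (lTgt R)).Sublist (p :: L.map (lTgt R)) ∧
      List.Chain' (goodPair R) L' := by
  intro n
  induction n with
  | zero =>
    intro L p q hlen hch
    rw [Nat.le_zero, List.length_eq_zero_iff] at hlen
    subst hlen
    exact ⟨[], hch, le_rfl, List.Sublist.refl _, List.isChain_nil⟩
  | succ n ih =>
    intro L p q hlen hch
    rcases find_bad R L with hgood | ⟨L₁, l, l', L₂, heq, hbad⟩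
    · exact ⟨L, hch, le_rfl, List.Sublist.refl _, hgood⟩
    · obtain ⟨hedge, hcoord, -⟩ := hbad
      subst heq
      obtain ⟨m₁, h₁, h₂⟩ := chain_split R hch
      obtain ⟨hm₁, hok, h₃⟩ := chain_cons_inv R h₂
      obtain ⟨hm₂, hok', h₄⟩ := chain_cons_inv R h₃
      set m : Lnk R := ⟨l.1, l.2.1, l'.2.2⟩ with hm
      have hokm : LinkOK R m := ⟨hok.1, by rw [hm]; simp only; rw [hedge]; exact hok'.2⟩
      have hlTgtm : lTgt R m = lTgt R l' := by
        show R.graph.param l.1 l'.2.2 = R.graph.param l'.1 l'.2.2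
        rw [hedge]
      have hlSrcm : lSrc R m = lSrc R l := rfl
      have hchain' : Chain R p q (L₁ ++ m :: L₂) := by
        refine chain_append R h₁ ?_
        rw [hm₁, ← hlSrcm]
        exact Chain.cons hokm (hlTgtm ▸ h₄)
      have hlen' : (L₁ ++ m :: L₂).length ≤ n := by
        have h5 : (L₁ ++ l :: l' :: L₂).length ≤ n + 1 := hlen
        simp at h5 ⊢
        omega
      obtain ⟨L', hch', hc', hsub', hgood'⟩ := ih _ p q hlen' hchain'
      refine ⟨L', hch', ?_, ?_, hgood'⟩
      · refine hc'.trans ?_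
        rw [cost_append, cost_append, cost_cons, cost_cons, cost_cons]
        have htri : lCost R m ≤ lCost R l + lCost R l' := by
          show |l.2.1 - l'.2.2| ≤ |l.2.1 - l.2.2| + |l'.2.1 - l'.2.2|
          rw [hcoord]
          exact abs_sub_le _ _ _
        linarith
      · refine hsub'.trans ?_
        refine List.Sublist.cons₂ p ?_
        simp only [List.map_append, List.map_cons]
        refine List.Sublist.append_left ?_ _
        rw [hlTgtm]
        exact List.Sublist.cons _ (List.Sublist.refl _)

omit [CompactSpace X] in
lemma normalize (hX : IsGeodesicSpace X) (p q : G) {c : ℝ} (L₀ : List (Lnk R))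
    (hch : Chain R p q L₀) (hc : cost R L₀ ≤ c) :
    ∃ L, Chain R p q L ∧ cost R L ≤ c ∧ (p :: L.map (lTgt R)).Nodup ∧
      List.Chain' (goodPair R) L := by
  obtain ⟨L₁, hch₁, hc₁, hnd₁, -⟩ := nodup_phase R L₀.length L₀ p q le_rfl hch
  obtain ⟨L₂, hch₂, hc₂, hsub₂, hgood₂⟩ := good_phase R L₁.length L₁ p q le_rfl hch₁
  exact ⟨L₂, hch₂, by linarith, hsub₂.nodup hnd₁, hgood₂⟩

omit [CompactSpace X] in
lemma link_ne {p q : G} {l : Lnk R} {t : List (Lnk R)} (hch : Chain R p q (l :: t))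
    (hnd : (p :: (l :: t).map (lTgt R)).Nodup) : l.2.1 ≠ l.2.2 := by
  intro heq
  obtain ⟨hpeq, -, -⟩ := chain_cons_inv R hch
  have : p = lTgt R l := by
    rw [hpeq]
    show R.graph.param l.1 l.2.1 = R.graph.param l.1 l.2.2
    rw [heq]
  have hmem : p ∈ (l :: t).map (lTgt R) := by
    rw [List.map_cons]
    exact List.mem_cons.mpr (Or.inl this)
  exact (List.nodup_cons.mp hnd).1 hmem

/-! ### Lifting -/

open Classical in
noncomputable def mchargeE (ε : ℝ) (v : G) : ℝ :=
  if R.IsMergingVertex v then R.fiberDiamSup + ε else 0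

lemma mchargeE_nonneg {ε : ℝ} (hε : 0 ≤ ε) (v : G) : 0 ≤ mchargeE R ε v := by
  unfold mchargeE
  split
  · linarith [Mf_nonneg R]
  · exact le_rfl

omit [CompactSpace X] in
lemma max_junction {l₁ ld : Lnk R} (hup : isUp R l₁) (hdown : ¬ isUp R ld)
    (hne' : ld.2.1 ≠ ld.2.2) (hadj : lTgt R l₁ = lSrc R ld) (hgood : goodPair R l₁ ld)
    (hok₁ : LinkOK R l₁) (hokd : LinkOK R ld) :
    R.IsMergingVertex (lTgt R l₁) ∧ l₁.2.2 = R.graph.len l₁.1 ∧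
      ld.2.1 = R.graph.len ld.1 := by
  have hddir : ld.2.2 < ld.2.1 := lt_of_le_of_ne (not_lt.mp hdown) (Ne.symm hne')
  have hb₁pos : 0 < l₁.2.2 := lt_of_le_of_lt hok₁.1.1 hup
  have hdpos : 0 < ld.2.1 := lt_of_le_of_lt hokd.2.1 hddir
  have hiff : ¬(isUp R l₁ ↔ isUp R ld) := fun hiff => hdown (hiff.mp hup)
  rcases eq_or_lt_of_le hok₁.2.2 with hb₁ | hb₁
  · -- l₁.2.2 = len
    have hvert : lTgt R l₁ ∈ R.graph.vertexSet := by
      refine ⟨l₁.1, Or.inr ?_⟩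
      show lTgt R l₁ = R.graph.param l₁.1 (R.graph.len l₁.1)
      rw [← hb₁]; rfl
    rcases eq_or_lt_of_le hokd.1.2 with hd₁ | hd₁
    · have hne : l₁.1 ≠ ld.1 := by
        intro hcon
        exact hgood ⟨hcon, by rw [hb₁, hd₁, hcon], hiff⟩
      refine ⟨⟨l₁.1, ld.1, hne, ?_, ?_⟩, hb₁, hd₁⟩
      · show R.graph.param l₁.1 (R.graph.len l₁.1) = lTgt R l₁
        rw [← hb₁]; rfl
      · show R.graph.param ld.1 (R.graph.len ld.1) = lTgt R l₁
        rw [← hd₁, hadj]; rfl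
    · exact absurd hadj (vertex_not_interior R hvert ⟨hdpos, hd₁⟩)
  · -- l₁.2.2 interior : contradiction with goodPair
    exfalso
    have h5 := interior_eq R ⟨hb₁pos, hb₁⟩ hokd.1 hadj.symm
    exact hgood ⟨h5.1.symm, h5.2.symm, hiff⟩

omit [CompactSpace X] in
lemma not_merging_uniq {e : R.graph.E} (h : ¬ R.IsMergingVertex (R.graph.tgt e)) :
    ∀ e', R.graph.tgt e' = R.graph.tgt e → e' = e := by
  intro e' he'
  by_contra hne
  exact h ⟨e', e, hne, he', rfl⟩

lemma rev_lift (hX : IsGeodesicSpace X) {ε : ℝ} (hε : 0 < ε) :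
    ∀ n (A : List (Lnk R)) (p m : G), A.length ≤ n → Chain R p m A →
      (∀ l ∈ A, isUp R l) → ∀ y, R.π y = m →
      ∃ z, R.π z = p ∧
        dist y z ≤ cost R A + (A.map (fun l => mchargeE R ε (lTgt R l))).sum := by
  intro n
  induction n with
  | zero =>
    intro A p m hlen hch hup y hy
    rw [Nat.le_zero, List.length_eq_zero_iff] at hlen
    subst hlen
    rw [chain_nil_inv R hch]
    exact ⟨y, hy, by simp [cost_nil]⟩
  | succ n ih =>
    intro A p m hlen hch hup y hy
    rcases List.eq_nil_or_concat A with rfl | ⟨A'', l, rfl⟩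
    · rw [chain_nil_inv R hch]
      exact ⟨y, hy, by simp [cost_nil]⟩
    · rw [List.concat_eq_append] at hch hup hlen ⊢
      obtain ⟨m', h₁, h₂⟩ := chain_split R hch
      obtain ⟨hm', hok, h₃⟩ := chain_cons_inv R h₂
      have hm : lTgt R l = m := chain_nil_inv R h₃
      have hupl : isUp R l := hup l (by simp)
      have hup' : l.2.1 < l.2.2 := hupl
      have hA''up : ∀ l' ∈ A'', isUp R l' := fun l' hl' => hup l' (by simp [hl'])
      have hlen'' : A''.length ≤ n := by simp at hlen; omega
      have ha0 : 0 ≤ l.2.1 := hok.1.1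
      have hblen : l.2.2 ≤ R.graph.len l.1 := hok.2.2
      have hcost : lCost R l = l.2.2 - l.2.1 := by
        unfold lCost; rw [abs_sub_comm]; exact abs_of_nonneg (by linarith)
      have hmnn := mchargeE_nonneg R hε.le (lTgt R l)
      -- cross the last link downwards from y
      have hcross : ∃ y', R.π y' = R.graph.param l.1 l.2.1 ∧
          dist y y' ≤ lCost R l + mchargeE R ε (lTgt R l) := by
        rcases eq_or_lt_of_le hblen with hb | hb
        · -- top is the vertex tgt l.1
          have htgteq : R.graph.tgt l.1 = lTgt R l := by
            show R.graph.param l.1 (R.graph.len l.1) = lTgt R l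
            rw [← hb]; rfl
          have hym : R.π y = R.graph.tgt l.1 := by rw [hy, ← hm, htgteq]
          by_cases hmerg : R.IsMergingVertex (lTgt R l)
          · obtain ⟨w₀, w', hw₀, hw', hd⟩ := steer R hX
              (e := l.1) (s := l.2.1) ⟨ha0, by rw [← hb]; exact hup'⟩ hε
            refine ⟨w', hw', ?_⟩
            have hhop : dist y w₀ ≤ R.fiberDiamSup := fiber_hop R (by rw [hym, hw₀])
            have hd2 : dist y w' ≤ dist y w₀ + dist w₀ w' := dist_triangle _ _ _
            have hmq : mchargeE R ε (lTgt R l) = R.fiberDiamSup + ε := by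
              unfold mchargeE; rw [if_pos hmerg]
            rw [hcost, hmq, ← hb] at *
            linarith
          · obtain ⟨y', hy', hd⟩ := descend_tgt R hX (not_merging_uniq R (htgteq ▸ hmerg))
              hym l.2.1 ⟨ha0, by linarith⟩
            refine ⟨y', hy', ?_⟩
            have hdb : dist y y' = l.2.2 - l.2.1 := by rw [hd, ← hb]
            rw [hcost]
            linarith
        · -- top is interior
          have hym : R.π y = R.graph.param l.1 l.2.2 := by rw [hy, ← hm]; rfl
          obtain ⟨y', hy', hd⟩ := descend_interior R hX
            ⟨lt_of_le_of_lt ha0 hup', hb⟩ hym l.2.1 ⟨ha0, hup'.le⟩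
          refine ⟨y', hy', ?_⟩
          rw [hcost]
          linarith
      obtain ⟨y', hy'π, hy'd⟩ := hcross
      have hy'm' : R.π y' = m' := by rw [hy'π, hm']; rfl
      obtain ⟨z, hzπ, hzd⟩ := ih A'' p m' hlen'' h₁ hA''up y' hy'm'
      refine ⟨z, hzπ, ?_⟩
      have htri := dist_triangle y y' z
      have hsum : ((A'' ++ [l]).map (fun l => mchargeE R ε (lTgt R l))).sum
          = (A''.map (fun l => mchargeE R ε (lTgt R l))).sum + mchargeE R ε (lTgt R l) := by
        simp
      rw [cost_append, cost_cons, cost_nil, hsum]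
      linarith

omit [CompactSpace X] in
lemma take_up : ∀ (L : List (Lnk R)), ∃ A rest, L = A ++ rest ∧ (∀ l ∈ A, isUp R l) ∧
    (∀ l t, rest = l :: t → ¬ isUp R l) ∧
    (∀ l₀ t₀, L = l₀ :: t₀ → isUp R l₀ → A ≠ []) := by
  intro L
  induction L with
  | nil =>
    exact ⟨[], [], rfl, by simp, fun l t h => by simp at h, fun l₀ t₀ h => by simp at h⟩
  | cons l t ih =>
    by_cases hu : isUp R l
    · obtain ⟨A, rest, heq, hA, hrest, -⟩ := ih
      refine ⟨l :: A, rest, by rw [heq, List.cons_append], ?_, hrest, fun _ _ _ _ => by simp⟩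
      intro l' hl'
      rcases List.mem_cons.mp hl' with h | h
      · exact h ▸ hu
      · exact hA l' h
    · refine ⟨[], l :: t, rfl, by simp, ?_, ?_⟩
      · intro l' t' heq' hup'
        injection heq' with h1 h2
        rw [← h1] at hup'
        exact hu hup'
      · intro l₀ t₀ heq₀ hup₀
        injection heq₀ with h1 h2
        rw [← h1] at hup₀
        exact absurd hup₀ hu

lemma mcsum_nonneg {ε : ℝ} (hε : 0 ≤ ε) (A : List (Lnk R)) :
    0 ≤ (A.map (fun l => mchargeE R ε (lTgt R l))).sum := by
  apply List.sum_nonneg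
  intro x hx
  obtain ⟨l, -, rfl⟩ := List.mem_map.mp hx
  exact mchargeE_nonneg R hε _

lemma main_lift (hX : IsGeodesicSpace X) {ε : ℝ} (hε : 0 < ε) :
    ∀ n (L : List (Lnk R)) (p q : G), L.length ≤ n → Chain R p q L →
      (p :: L.map (lTgt R)).Nodup → List.Chain' (goodPair R) L →
      ∀ x y, R.π x = p → R.π y = q →
      dist x y ≤ cost R L + R.fiberDiamSup + mchargeE R ε p
        + 2 * (L.map (fun l => mchargeE R ε (lTgt R l))).sum := by
  intro n
  induction n with
  | zero =>
    intro L p q hlen hch hnd hgood x y hx hy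
    rw [Nat.le_zero, List.length_eq_zero_iff] at hlen
    subst hlen
    have hpq : p = q := chain_nil_inv R hch
    have hhop : dist x y ≤ R.fiberDiamSup := fiber_hop R (by rw [hx, hy, hpq])
    have h1 := mchargeE_nonneg R hε.le p
    simp only [cost_nil, List.map_nil, List.sum_nil]
    linarith
  | succ n ih =>
    intro L p q hlen hch hnd hgood x y hx hy
    cases L with
    | nil =>
      have hpq : p = q := chain_nil_inv R hch
      have hhop : dist x y ≤ R.fiberDiamSup := fiber_hop R (by rw [hx, hy, hpq])
      have h1 := mchargeE_nonneg R hε.le p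
      simp only [cost_nil, List.map_nil, List.sum_nil]
      linarith
    | cons l t =>
      obtain ⟨hpeq, hok, hcht⟩ := chain_cons_inv R hch
      have hne := link_ne R hch hnd
      have hmnnp := mchargeE_nonneg R hε.le p
      by_cases hu : isUp R l
      · -- ascending prefix
        obtain ⟨A, rest, heqL, hAup, hrestdn, hAne⟩ := take_up R (l :: t)
        have hAne' : A ≠ [] := hAne l t rfl hu
        rw [heqL] at hch hnd hgood hlen ⊢
        obtain ⟨v₀, hchA, hchrest⟩ := chain_split R hch
        rcases List.eq_nil_or_concat A with rfl | ⟨A', l₁, rfl⟩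
        · exact absurd rfl hAne'
        rw [List.concat_eq_append] at hchA hnd hgood hlen hAup ⊢
        obtain ⟨m', hchA', hchl₁⟩ := chain_split R hchA
        obtain ⟨hm', hok₁, h₃⟩ := chain_cons_inv R hchl₁
        have hv₀ : lTgt R l₁ = v₀ := chain_nil_inv R h₃
        have hupl₁ : isUp R l₁ := hAup l₁ (by simp)
        have hup₁' : l₁.2.1 < l₁.2.2 := hupl₁
        have hcost₁ : lCost R l₁ = l₁.2.2 - l₁.2.1 := by
          unfold lCost; rw [abs_sub_comm]; exact abs_of_nonneg (by linarith)
        cases rest with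
        | nil =>
          have hq : v₀ = q := chain_nil_inv R hchrest
          rw [List.append_nil] at hnd hgood hlen ⊢
          obtain ⟨z, hz, hzd⟩ := rev_lift R hX hε (A' ++ [l₁]).length (A' ++ [l₁]) p v₀
            le_rfl hchA hAup y (by rw [hy, hq])
          have hhop : dist x z ≤ R.fiberDiamSup := fiber_hop R (by rw [hx, hz])
          have htri := dist_triangle x z y
          have hs := mcsum_nonneg R hε.le (A' ++ [l₁])
          rw [dist_comm z y] at htri
          linarith
        | cons ld rest' =>
          have hdnld : ¬ isUp R ld := hrestdn ld rest' rfl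
          obtain ⟨hv₀', hokld, hchrest'⟩ := chain_cons_inv R hchrest
          have hsubnd : (v₀ :: (ld :: rest').map (lTgt R)).Nodup := by
            have hsl : (v₀ :: (ld :: rest').map (lTgt R)).Sublist
                (p :: ((A' ++ [l₁]) ++ ld :: rest').map (lTgt R)) := by
              have hmapeq : ((A' ++ [l₁]) ++ ld :: rest').map (lTgt R)
                  = A'.map (lTgt R) ++ (lTgt R l₁ :: (ld :: rest').map (lTgt R)) := by
                simp
              rw [hmapeq, ← hv₀]
              exact (List.sublist_append_right _ _).cons p
            exact hsl.nodup hnd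
          have hneld : ld.2.1 ≠ ld.2.2 := link_ne R hchrest hsubnd
          have hgp : goodPair R l₁ ld := by
            obtain ⟨-, -, h3⟩ := List.isChain_append.mp hgood
            refine h3 l₁ ?_ ld rfl
            have h7 : (A' ++ [l₁]).getLast? = some l₁ := by
              simp
            rw [h7]
            rfl
          obtain ⟨hmergv, hb₁len, hldlen⟩ := max_junction R hupl₁ hdnld hneld
            (by rw [hv₀, hv₀']) hgp hok₁ hokld
          obtain ⟨w₀, w', hw₀, hw', hd⟩ := steer R hX (e := l₁.1) (s := l₁.2.1)
            ⟨hok₁.1.1, by rw [← hb₁len]; exact hup₁'⟩ hε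
          have hw₀v : R.π w₀ = v₀ := by
            rw [hw₀, ← hv₀]
            show R.graph.param l₁.1 (R.graph.len l₁.1) = lTgt R l₁
            rw [← hb₁len]; rfl
          have hw'm' : R.π w' = m' := by rw [hw', hm']; rfl
          obtain ⟨z, hz, hzd⟩ := rev_lift R hX hε A'.length A' p m' le_rfl hchA'
            (fun l' hl' => hAup l' (by simp [hl'])) w' hw'm'
          have hlenrest : (ld :: rest').length ≤ n := by
            simp only [List.length_append, List.length_cons, List.length_singleton] at hlen ⊢
            omega
          have hgoodrest : List.Chain' (goodPair R) (ld :: rest') :=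
            (List.isChain_append.mp hgood).2.1
          have IHrest := ih (ld :: rest') v₀ q hlenrest hchrest hsubnd hgoodrest w₀ y hw₀v hy
          -- combine all the distances
          have hhop : dist x z ≤ R.fiberDiamSup := fiber_hop R (by rw [hx, hz])
          have htri1 : dist x y ≤ dist x z + dist z w' + dist w' w₀ + dist w₀ y := by
            have := dist_triangle4 x z w' y
            have h5 : dist w' y ≤ dist w' w₀ + dist w₀ y := dist_triangle _ _ _
            linarith
          have hmv : mchargeE R ε v₀ = R.fiberDiamSup + ε := by
            unfold mchargeE
            rw [if_pos (hv₀ ▸ hmergv)]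
          have hd' : dist w' w₀ ≤ lCost R l₁ + ε := by
            rw [dist_comm, hcost₁, hb₁len]
            exact hd
          have hcosteq : cost R ((A' ++ [l₁]) ++ ld :: rest')
              = cost R A' + lCost R l₁ + cost R (ld :: rest') := by
            rw [cost_append, cost_append, cost_cons, cost_nil]
            ring
          have hsumeq : (((A' ++ [l₁]) ++ ld :: rest').map
                (fun l => mchargeE R ε (lTgt R l))).sum
              = (A'.map (fun l => mchargeE R ε (lTgt R l))).sum + mchargeE R ε v₀
                + ((ld :: rest').map (fun l => mchargeE R ε (lTgt R l))).sum := by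
            simp [hv₀]
            ring
          have hsA' := mcsum_nonneg R hε.le A'
          rw [dist_comm z w'] at htri1
          rw [hcosteq, hsumeq, hmv]
          linarith
      · -- descending head
        have hdn : l.2.2 < l.2.1 := lt_of_le_of_ne (not_lt.mp hu) (Ne.symm hne)
        have hcost : lCost R l = l.2.1 - l.2.2 := abs_of_nonneg (by linarith)
        have hndt : (lTgt R l :: t.map (lTgt R)).Nodup := by
          have h6 := hnd.of_cons
          rwa [List.map_cons] at h6
        have hb0 : 0 ≤ l.2.2 := hok.2.1
        have hcross : ∃ x₂, R.π x₂ = lTgt R l ∧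
            dist x x₂ ≤ lCost R l + mchargeE R ε p := by
          rcases eq_or_lt_of_le hok.1.2 with ha | ha
          · -- p is the vertex tgt l.1
            have hptgt : p = R.graph.tgt l.1 := by
              rw [hpeq]
              show R.graph.param l.1 l.2.1 = R.graph.param l.1 (R.graph.len l.1)
              rw [ha]
            by_cases hmerg : R.IsMergingVertex p
            · obtain ⟨w₀, w', hw₀, hw', hd⟩ := steer R hX (e := l.1) (s := l.2.2)
                ⟨hb0, by rw [← ha]; exact hdn⟩ hε
              refine ⟨w', hw', ?_⟩
              have hhop : dist x w₀ ≤ R.fiberDiamSup :=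
                fiber_hop R (by rw [hx, hw₀, hptgt])
              have htri := dist_triangle x w₀ w'
              have hmp : mchargeE R ε p = R.fiberDiamSup + ε := by
                unfold mchargeE; rw [if_pos hmerg]
              rw [hcost, hmp, ← ha] at *
              linarith
            · obtain ⟨x₂, hx₂, hd⟩ := descend_tgt R hX
                (not_merging_uniq R (hptgt ▸ hmerg)) (by rw [hx, hptgt]) l.2.2
                ⟨hb0, by linarith⟩
              refine ⟨x₂, hx₂, ?_⟩
              rw [hcost, ← ha] at *
              linarith
          · -- p interior
            have hxp : R.π x = R.graph.param l.1 l.2.1 := by rw [hx, hpeq]; rfl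
            obtain ⟨x₂, hx₂, hd⟩ := descend_interior R hX
              ⟨lt_of_le_of_lt hb0 hdn, ha⟩ hxp l.2.2 ⟨hb0, hdn.le⟩
            refine ⟨x₂, hx₂, ?_⟩
            rw [hcost]
            linarith
        obtain ⟨x₂, hx₂π, hx₂d⟩ := hcross
        have hlent : t.length ≤ n := by
          simp only [List.length_cons] at hlen; omega
        have IHt := ih t (lTgt R l) q hlent hcht hndt hgood.tail x₂ y hx₂π hy
        have htri := dist_triangle x x₂ y
        have hmnn := mchargeE_nonneg R hε.le (lTgt R l)
        rw [cost_cons, List.map_cons, List.sum_cons]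
        linarith

lemma charge_sum_le (hX : IsGeodesicSpace X) {ε : ℝ} (hε : 0 ≤ ε) (lst : List G)
    (hnd : lst.Nodup) :
    (lst.map (mchargeE R ε)).sum ≤ (R.graph.betti1 : ℝ) * (R.fiberDiamSup + ε) := by
  classical
  have h1 : lst.toFinset.sum (mchargeE R ε) = (lst.map (mchargeE R ε)).sum :=
    List.sum_toFinset _ hnd
  rw [← h1]
  have h2 : lst.toFinset.sum (mchargeE R ε)
      = ∑ v ∈ lst.toFinset.filter (fun v => R.IsMergingVertex v),
          (R.fiberDiamSup + ε) := by
    rw [Finset.sum_filter]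
    apply Finset.sum_congr rfl
    intro v _
    by_cases h : R.IsMergingVertex v <;> simp [mchargeE, h]
  rw [h2, Finset.sum_const, nsmul_eq_mul]
  have h3 : (lst.toFinset.filter (fun v => R.IsMergingVertex v)).card ≤ R.graph.betti1 :=
    merging_card_le R hX _ (fun v hv => (Finset.mem_filter.mp hv).2)
  have h4 : (0:ℝ) ≤ R.fiberDiamSup + ε := by linarith [Mf_nonneg R]
  exact mul_le_mul_of_nonneg_right (Nat.cast_le.mpr h3) h4

end RProof

theorem dist_le_reeb_dist_add' {X : Type*} [MetricSpace X] [CompactSpace X]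
    [ConnectedSpace X] (hX : IsGeodesicSpace X) (r : X)
    {G : Type*} [MetricSpace G] (R : ReebGraphOf X r G) :
    ∀ x y : X,
      dist x y ≤ dist (R.π x) (R.π y) + 2 * ((R.graph.betti1 : ℝ) + 1) * R.fiberDiamSup := by
  intro x y
  set p := R.π x with hp
  set q := R.π y with hq
  set Mf := R.fiberDiamSup with hMf
  set β : ℝ := (R.graph.betti1 : ℝ) with hβ
  have hβ0 : 0 ≤ β := Nat.cast_nonneg _
  have hMf0 : 0 ≤ Mf := RProof.Mf_nonneg R
  refine le_of_forall_pos_le_add ?_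
  intro ε₀ hε₀
  obtain ⟨L₀, hch₀, hc₀⟩ := RProof.exists_chain_le R hX p q (half_pos hε₀)
  obtain ⟨L, hch, hc, hnd, hgood⟩ := RProof.normalize R hX p q L₀ hch₀ hc₀
  set ε : ℝ := ε₀ / (4 * β + 4) with hεdef
  have hden : (0:ℝ) < 4 * β + 4 := by linarith
  have hε : 0 < ε := div_pos hε₀ hden
  have hmain := RProof.main_lift R hX hε L.length L p q le_rfl hch hnd hgood x y rfl rfl
  -- bound the charges
  have hfull : (RProof.mchargeE R ε p
        + (L.map (fun l => RProof.mchargeE R ε (RProof.lTgt R l))).sum)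
      = ((p :: L.map (RProof.lTgt R)).map (RProof.mchargeE R ε)).sum := by
    simp only [List.map_cons, List.sum_cons, List.map_map, Function.comp_def]
  have hcharge : ((p :: L.map (RProof.lTgt R)).map (RProof.mchargeE R ε)).sum
      ≤ β * (Mf + ε) := RProof.charge_sum_le R hX hε.le _ hnd
  have hmnnp := RProof.mchargeE_nonneg R hε.le p
  have hsum0 := RProof.mcsum_nonneg R hε.le L
  -- mchargeE p + 2 Σ ≤ 2 (mchargeE p + Σ) ≤ 2 β (Mf + ε)
  have hkey : RProof.mchargeE R ε p
      + 2 * (L.map (fun l => RProof.mchargeE R ε (RProof.lTgt R l))).sum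
      ≤ 2 * β * (Mf + ε) := by
    have h5 : RProof.mchargeE R ε p
        + (L.map (fun l => RProof.mchargeE R ε (RProof.lTgt R l))).sum ≤ β * (Mf + ε) := by
      rw [hfull]; exact hcharge
    linarith
  have hεbound : 2 * β * ε ≤ ε₀ / 2 := by
    have heq : ε * (4 * β + 4) = ε₀ := div_mul_cancel₀ _ (ne_of_gt hden)
    have heq' : 4 * (β * ε) + 4 * ε = ε₀ := by rw [← heq]; ring
    have hβε : 0 ≤ β * ε := mul_nonneg hβ0 hε.le
    linarith
  have hfinal : dist x y ≤ dist p q + ε₀ / 2 + Mf + 2 * β * Mf + 2 * β * ε := by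
    have h6 : 2 * β * (Mf + ε) = 2 * β * Mf + 2 * β * ε := by ring
    rw [h6] at hkey
    linarith
  have h7 : Mf + 2 * β * Mf ≤ 2 * (β + 1) * Mf := by nlinarith
  linarith

/-- For the metric Reeb graph `G` of `d = d_X(r,·)` on a compact connected geodesic
space `X`: `d_X(x,y) ≤ d_G(π x, π y) + 2 (β₁(G) + 1) M`, where `β₁(G)` is the first
Betti number of `G` and `M` the supremum of the diameters of the fibers of `π`. -/
theorem dist_le_reeb_dist_add {X : Type*} [MetricSpace X] [CompactSpace X]
    [ConnectedSpace X] (hX : IsGeodesicSpace X) (r : X)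
    {G : Type*} [MetricSpace G] (R : ReebGraphOf X r G) :
    ∀ x y : X,
      dist x y ≤ dist (R.π x) (R.π y) + 2 * ((R.graph.betti1 : ℝ) + 1) * R.fiberDiamSup :=
  dist_le_reeb_dist_add' hX r R
end
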